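/- arXiv:1805.04991 — 2 statements merged into one kernel-verified Lean document; each statement's English description precedes it below -/
import Mathlib

section
/- There exist absolute constants C > 0 and δ > 0 with the following property. Let n ≥ 3, r ≥ 3, let k = (k_1,…,k_n) be a sequence of non-negative integers, and let G* be a simple r-uniform hypergraph on V with degree sequence k containing the edge e_i. If r^4·k_max^3 ≤ δ·M(k), then the number N of 6-tuples in S*(G*,e_i) whose forward switching is legal satisfies |N − r(r−1)·M(k)^2| ≤ C·r(r−1)·M(k)^2·(k_max^2 + r·k_max)/M(k). -/
/-- `H` is a simple `r`-uniform hypergraph on `Fin n`: a set of `r`-element subsets. -/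
def isUniform (n r : ℕ) (H : Finset (Finset (Fin n))) : Prop :=
  ∀ e ∈ H, e.card = r

/-- The degree of vertex `v` in the hypergraph `H`. -/
def hDeg (n : ℕ) (H : Finset (Finset (Fin n))) (v : Fin n) : ℕ :=
  (H.filter fun e => v ∈ e).card

/-- Membership predicate for the set `S*(G*, e_i)` of 6-tuples
`(z₁, z₂, y₁, y₂, f₁, f₂)`. -/
def SstarMem (n : ℕ) (Gs : Finset (Finset (Fin n))) (ei f1 f2 : Finset (Fin n))
    (z1 z2 y1 y2 : Fin n) : Prop :=
  z1 ≠ z2 ∧ z1 ≠ y1 ∧ z1 ≠ y2 ∧ z2 ≠ y1 ∧ z2 ≠ y2 ∧ y1 ≠ y2 ∧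
  f1 ∈ Gs ∧ f2 ∈ Gs ∧ ei ≠ f1 ∧ ei ≠ f2 ∧ f1 ≠ f2 ∧
  z1 ∈ ei ∧ z2 ∈ ei ∧ y1 ∈ f1 ∧ y2 ∈ f2

/-- The set `S*(G*, e_i)` of 6-tuples `(z₁, z₂, y₁, y₂, f₁, f₂)`. -/
def Sstar (n : ℕ) (Gs : Finset (Finset (Fin n))) (ei : Finset (Fin n)) :
    Set (Fin n × Fin n × Fin n × Fin n × Finset (Fin n) × Finset (Fin n)) :=
  {p | SstarMem n Gs ei p.2.2.2.2.1 p.2.2.2.2.2 p.1 p.2.1 p.2.2.1 p.2.2.2.1}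

/-- The multiset of vertex multisets obtained from `G*` by the forward switching
determined by `(z₁, z₂, y₁, y₂, f₁, f₂)`: the edges `e_i, f₁, f₂` are replaced by
`g = (e_i ∖ {z₁,z₂}) ∪ {y₁,y₂}` and `g_j = (f_j ∖ {y_j}) ∪ {z_j}` for `j = 1,2`. -/
def fwdResult (n : ℕ) (Gs : Finset (Finset (Fin n))) (ei f1 f2 : Finset (Fin n))
    (z1 z2 y1 y2 : Fin n) : Multiset (Multiset (Fin n)) :=
  (Gs.val.map Finset.val - {ei.val, f1.val, f2.val}) +
    {ei.val - {z1, z2} + {y1, y2}, f1.val - {y1} + {z1}, f2.val - {y2} + {z2}}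

/-- The forward switching is legal when the result is again a simple hypergraph
(no repeated vertex within an edge, no repeated edge) not containing `e_i`. -/
def fwdLegal (n : ℕ) (Gs : Finset (Finset (Fin n))) (ei f1 f2 : Finset (Fin n))
    (z1 z2 y1 y2 : Fin n) : Prop :=
  (fwdResult n Gs ei f1 f2 z1 z2 y1 y2).Nodup ∧
  (∀ m ∈ fwdResult n Gs ei f1 f2 z1 z2 y1 y2, m.Nodup) ∧
  ei.val ∉ fwdResult n Gs ei f1 f2 z1 z2 y1 y2

/-- `M(k)`, the sum of the degrees. -/
def Mk (n : ℕ) (k : Fin n → ℕ) : ℕ := ∑ v, k v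

/-- `k_max`, the maximum degree. -/
def kmax (n : ℕ) (k : Fin n → ℕ) : ℕ := Finset.univ.sup k


open Finset

private lemma peel {α β : Type*} [DecidableEq β] [Fintype α]
    (pred : α → Prop) [DecidablePred pred] (π : α → β) (t : Finset β) (c : ℕ)
    (h1 : ∀ a, pred a → π a ∈ t)
    (h2 : ∀ b ∈ t, (Finset.univ.filter fun a => pred a ∧ π a = b).card ≤ c) :
    (Finset.univ.filter pred).card ≤ t.card * c := by
  rw [Finset.card_eq_sum_card_fiberwise (f := π) (t := t)
    (fun x hx => h1 x (Finset.mem_filter.mp hx).2)]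
  calc ∑ b ∈ t, ((univ.filter pred).filter fun a => π a = b).card
      ≤ ∑ _b ∈ t, c := by
        refine Finset.sum_le_sum fun b hb => ?_
        rw [Finset.filter_filter]
        exact h2 b hb
    _ = t.card * c := by rw [Finset.sum_const, smul_eq_mul]

private lemma card_filter_le_one {α : Type*} [Fintype α] (pred : α → Prop) [DecidablePred pred]
    (h : ∀ a b, pred a → pred b → a = b) : (Finset.univ.filter pred).card ≤ 1 :=
  Finset.card_le_one.mpr fun a ha b hb =>
    h a b (Finset.mem_filter.mp ha).2 (Finset.mem_filter.mp hb).2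

private lemma sub_nodup {α : Type*} [DecidableEq α] {s : Multiset α} (h : s.Nodup)
    (t : Multiset α) : (s - t).Nodup := by
  exact Multiset.nodup_of_le (Multiset.sub_le_self s t) h

private lemma cnt_val {α : Type*} [DecidableEq α] (s : Finset α) (a : α) :
    s.val.count a = if a ∈ s then 1 else 0 := by
  split
  · exact Multiset.count_eq_one_of_mem s.nodup (by assumption)
  · exact Multiset.count_eq_zero.2 (by assumption)

section Main

variable {n : ℕ} (Gs : Finset (Finset (Fin n))) (ei : Finset (Fin n))

/-- the incidence finset -/
private def Inc : Finset (Fin n × Finset (Fin n)) :=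
  Finset.univ.filter fun q => q.2 ∈ Gs ∧ q.1 ∈ q.2

/-- tuple abbreviations -/
private abbrev Pt (n : ℕ) := Fin n × Fin n × Fin n × Fin n × Finset (Fin n) × Finset (Fin n)

private def zp (p : Pt n) : Fin n × Fin n := (p.1, p.2.1)
private def i1 (p : Pt n) : Fin n × Finset (Fin n) := (p.2.2.1, p.2.2.2.2.1)
private def i2 (p : Pt n) : Fin n × Finset (Fin n) := (p.2.2.2.1, p.2.2.2.2.2)

private def Qp (p : Pt n) : Prop :=
  zp p ∈ ei.offDiag ∧ i1 p ∈ Inc Gs ∧ i2 p ∈ Inc Gs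

private lemma tuple_ext {p q : Pt n} (h1 : zp p = zp q) (h2 : i1 p = i1 q)
    (h3 : i2 p = i2 q) : p = q := by
  obtain ⟨a,b,c,d,e,f⟩ := p; obtain ⟨a',b',c',d',e',f'⟩ := q
  simp_all [zp, i1, i2, Prod.ext_iff]

private lemma card_Inc {k : Fin n → ℕ} (hdeg : ∀ v, hDeg n Gs v = k v) :
    (Inc Gs).card = Mk n k := by
  rw [Mk, Finset.card_eq_sum_card_fiberwise (f := Prod.fst) (t := Finset.univ)
    (fun x _ => Finset.mem_univ _)]
  refine Finset.sum_congr rfl fun v _ => ?_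
  rw [← hdeg v, hDeg]
  refine Finset.card_nbij' (fun q => q.2) (fun f => (v, f)) ?_ ?_ ?_ ?_
  · intro a ha
    simp only [Inc, Finset.mem_coe, Finset.mem_filter, Finset.mem_univ, true_and] at ha
    simp [ha.1.1, ha.2 ▸ ha.1.2]
  · intro f hf
    simp only [Finset.mem_coe, Finset.mem_filter] at hf
    simp [Inc, hf.1, hf.2]
  · intro a ha
    simp only [Inc, Finset.mem_coe, Finset.mem_filter] at ha
    simp [← ha.2, Prod.ext_iff]
  · intro f hf
    simp

end Main
section Counting

variable {n : ℕ} {Gs : Finset (Finset (Fin n))} {ei : Finset (Fin n)} {k : Fin n → ℕ} {r : ℕ}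

private lemma tripleInj (pred : Pt n → Prop) [DecidablePred pred]
    (A : Finset (Fin n × Fin n)) (B C : Finset (Fin n × Finset (Fin n)))
    (h : ∀ p, pred p → zp p ∈ A ∧ i1 p ∈ B ∧ i2 p ∈ C) :
    (Finset.univ.filter pred).card ≤ A.card * (B.card * C.card) := by
  have := Finset.card_le_card_of_injOn (f := fun p => (zp p, i1 p, i2 p))
    (s := Finset.univ.filter pred) (t := A ×ˢ B ×ˢ C)
    (fun p hp => by
      obtain ⟨h1, h2, h3⟩ := h p (Finset.mem_filter.mp hp).2
      simp [Finset.mem_product, h1, h2, h3])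
    (fun p _ q _ hpq => by
      simp only [Prod.mk.injEq] at hpq
      exact tuple_ext hpq.1 hpq.2.1 hpq.2.2)
  simpa [Finset.card_product, mul_assoc] using this

private lemma pairInj23 (pred : Pt n → Prop) [DecidablePred pred]
    (b : Fin n × Fin n) (B C : Finset (Fin n × Finset (Fin n)))
    (h : ∀ p, pred p → zp p = b ∧ i1 p ∈ B ∧ i2 p ∈ C) :
    (Finset.univ.filter pred).card ≤ B.card * C.card := by
  have := Finset.card_le_card_of_injOn (f := fun p => (i1 p, i2 p))
    (s := Finset.univ.filter pred) (t := B ×ˢ C)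
    (fun p hp => by
      obtain ⟨h1, h2, h3⟩ := h p (Finset.mem_filter.mp hp).2
      simp [Finset.mem_product, h2, h3])
    (fun p hp q hq hpq => by
      simp only [Prod.mk.injEq] at hpq
      exact tuple_ext (((h p (Finset.mem_filter.mp hp).2).1).trans
        ((h q (Finset.mem_filter.mp hq).2).1).symm) hpq.1 hpq.2)
  simpa [Finset.card_product] using this

private lemma pairInj12 (pred : Pt n → Prop) [DecidablePred pred]
    (b : Fin n × Finset (Fin n)) (A : Finset (Fin n × Fin n))
    (C : Finset (Fin n × Finset (Fin n)))
    (h : ∀ p, pred p → zp p ∈ A ∧ i1 p = b ∧ i2 p ∈ C) :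
    (Finset.univ.filter pred).card ≤ A.card * C.card := by
  have := Finset.card_le_card_of_injOn (f := fun p => (zp p, i2 p))
    (s := Finset.univ.filter pred) (t := A ×ˢ C)
    (fun p hp => by
      obtain ⟨h1, h2, h3⟩ := h p (Finset.mem_filter.mp hp).2
      simp [Finset.mem_product, h1, h3])
    (fun p hp q hq hpq => by
      simp only [Prod.mk.injEq] at hpq
      exact tuple_ext hpq.1 (((h p (Finset.mem_filter.mp hp).2).2.1).trans
        ((h q (Finset.mem_filter.mp hq).2).2.1).symm) hpq.2)
  simpa [Finset.card_product] using this

private lemma pairInj13 (pred : Pt n → Prop) [DecidablePred pred]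
    (b : Fin n × Finset (Fin n)) (A : Finset (Fin n × Fin n))
    (B : Finset (Fin n × Finset (Fin n)))
    (h : ∀ p, pred p → zp p ∈ A ∧ i1 p ∈ B ∧ i2 p = b) :
    (Finset.univ.filter pred).card ≤ A.card * B.card := by
  have := Finset.card_le_card_of_injOn (f := fun p => (zp p, i1 p))
    (s := Finset.univ.filter pred) (t := A ×ˢ B)
    (fun p hp => by
      obtain ⟨h1, h2, h3⟩ := h p (Finset.mem_filter.mp hp).2
      simp [Finset.mem_product, h1, h2])
    (fun p hp q hq hpq => by
      simp only [Prod.mk.injEq] at hpq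
      exact tuple_ext hpq.1 hpq.2 (((h p (Finset.mem_filter.mp hp).2).2.2).trans
        ((h q (Finset.mem_filter.mp hq).2).2.2).symm))
  simpa [Finset.card_product] using this

private lemma deg_le_kmax (hdeg : ∀ v, hDeg n Gs v = k v) (v : Fin n) :
    (Gs.filter fun e => v ∈ e).card ≤ kmax n k := by
  rw [show (Gs.filter fun e => v ∈ e).card = hDeg n Gs v from rfl, hdeg v]
  exact Finset.le_sup (Finset.mem_univ v)

/-- incidences with vertex in a fixed set `s` -/
private lemma card_Inc_fst (hdeg : ∀ v, hDeg n Gs v = k v) (s : Finset (Fin n)) :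
    ((Inc Gs).filter fun q => q.1 ∈ s).card ≤ s.card * kmax n k := by
  classical
  have : (Inc Gs).filter (fun q => q.1 ∈ s) =
      Finset.univ.filter (fun q : Fin n × Finset (Fin n) =>
        (q.2 ∈ Gs ∧ q.1 ∈ q.2) ∧ q.1 ∈ s) := by
    simp [Inc, Finset.filter_filter]
  rw [this]
  refine peel _ Prod.fst s (kmax n k) (fun a ha => ha.2) (fun v _ => ?_)
  have := Finset.card_le_card_of_injOn (f := Prod.snd)
    (s := Finset.univ.filter fun q : Fin n × Finset (Fin n) =>
      ((q.2 ∈ Gs ∧ q.1 ∈ q.2) ∧ q.1 ∈ s) ∧ q.1 = v)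
    (t := Gs.filter fun e => v ∈ e)
    (fun q hq => by
      simp only [Finset.mem_coe, Finset.mem_filter, Finset.mem_univ, true_and] at hq ⊢
      exact ⟨hq.1.1.1, hq.2 ▸ hq.1.1.2⟩)
    (fun q hq q' hq' h => by
      have hq := Finset.mem_filter.mp hq; have hq' := Finset.mem_filter.mp hq'
      exact Prod.ext (hq.2.2.trans hq'.2.2.symm) h)
  exact this.trans (deg_le_kmax hdeg v)

/-- incidences whose edge contains a fixed vertex `z` -/
private lemma card_Inc_snd (hu : isUniform n r Gs) (hdeg : ∀ v, hDeg n Gs v = k v) (z : Fin n) :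
    ((Inc Gs).filter fun q => z ∈ q.2).card ≤ kmax n k * r := by
  classical
  have : (Inc Gs).filter (fun q => z ∈ q.2) =
      Finset.univ.filter (fun q : Fin n × Finset (Fin n) =>
        (q.2 ∈ Gs ∧ q.1 ∈ q.2) ∧ z ∈ q.2) := by
    simp [Inc, Finset.filter_filter]
  rw [this]
  refine le_trans (peel _ Prod.snd (Gs.filter fun e => z ∈ e) r
    (fun a ha => Finset.mem_filter.mpr ⟨ha.1.1, ha.2⟩) (fun f hf => ?_))
    (Nat.mul_le_mul_right r (deg_le_kmax hdeg z))
  have := Finset.card_le_card_of_injOn (f := Prod.fst)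
    (s := Finset.univ.filter fun q : Fin n × Finset (Fin n) =>
      ((q.2 ∈ Gs ∧ q.1 ∈ q.2) ∧ z ∈ q.2) ∧ q.2 = f)
    (t := f)
    (fun q hq => by
      simp only [Finset.mem_coe, Finset.mem_filter, Finset.mem_univ, true_and] at hq
      exact hq.2 ▸ hq.1.1.2)
    (fun q hq q' hq' h => by
      have hq := Finset.mem_filter.mp hq; have hq' := Finset.mem_filter.mp hq'
      exact Prod.ext h (hq.2.2.trans hq'.2.2.symm))
  exact this.trans (le_of_eq (hu f (Finset.mem_filter.mp hf).1))

end Counting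
section Legal

variable {n : ℕ} {Gs : Finset (Finset (Fin n))} {ei : Finset (Fin n)}

private lemma legal_of_good (hei : ei ∈ Gs) {z1 z2 y1 y2 : Fin n} {f1 f2 : Finset (Fin n)}
    (hz : (z1, z2) ∈ ei.offDiag) (hi1 : (y1, f1) ∈ Inc Gs) (hi2 : (y2, f2) ∈ Inc Gs)
    (n1 : y1 ∉ ei) (n2 : y2 ∉ ei) (n3 : z1 ∉ f1) (n4 : z2 ∉ f2)
    (n5 : y2 ∉ f1) (n6 : y1 ∉ f2) (n7 : z2 ∉ f1) (n8 : z1 ∉ f2)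
    (n9 : (ei.val - {z1, z2} + {y1, y2}) ∉ Gs.val.map Finset.val)
    (n10 : (f1.val - {y1} + {z1}) ∉ Gs.val.map Finset.val)
    (n11 : (f2.val - {y2} + {z2}) ∉ Gs.val.map Finset.val) :
    SstarMem n Gs ei f1 f2 z1 z2 y1 y2 ∧ fwdLegal n Gs ei f1 f2 z1 z2 y1 y2 := by
  classical
  obtain ⟨hz1, hz2, hzz⟩ := Finset.mem_offDiag.mp hz
  have hf1 : f1 ∈ Gs := (Finset.mem_filter.mp hi1).2.1
  have hy1 : y1 ∈ f1 := (Finset.mem_filter.mp hi1).2.2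
  have hf2 : f2 ∈ Gs := (Finset.mem_filter.mp hi2).2.1
  have hy2 : y2 ∈ f2 := (Finset.mem_filter.mp hi2).2.2
  have hz1y1 : z1 ≠ y1 := fun h => n1 (h ▸ hz1)
  have hz1y2 : z1 ≠ y2 := fun h => n2 (h ▸ hz1)
  have hz2y1 : z2 ≠ y1 := fun h => n1 (h ▸ hz2)
  have hz2y2 : z2 ≠ y2 := fun h => n2 (h ▸ hz2)
  have hy1y2 : y1 ≠ y2 := fun h => n6 (h ▸ hy2)
  have heif1 : ei ≠ f1 := fun h => n1 (h ▸ hy1)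
  have heif2 : ei ≠ f2 := fun h => n2 (h ▸ hy2)
  have hf1f2 : f1 ≠ f2 := fun h => n5 (h ▸ hy2)
  refine ⟨⟨hzz, hz1y1, hz1y2, hz2y1, hz2y2, hy1y2, hf1, hf2, heif1, heif2, hf1f2,
    hz1, hz2, hy1, hy2⟩, ?_⟩
  -- abbreviations
  set g : Multiset (Fin n) := ei.val - {z1, z2} + {y1, y2} with hg
  set g1 : Multiset (Fin n) := f1.val - {y1} + {z1} with hg1
  set g2 : Multiset (Fin n) := f2.val - {y2} + {z2} with hg2
  set E : Multiset (Multiset (Fin n)) := Gs.val.map Finset.val with hE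
  set S : Multiset (Multiset (Fin n)) := {ei.val, f1.val, f2.val} with hS
  have hEnd : E.Nodup := Gs.nodup.map Finset.val_injective
  have memE : ∀ h ∈ Gs, h.val ∈ E := fun h hh => Multiset.mem_map_of_mem _ hh
  -- counts
  have cg_y1 : g.count y1 = 1 := by
    rw [hg, Multiset.count_add, Multiset.count_sub]
    simp only [Multiset.insert_eq_cons, Multiset.count_cons, Multiset.count_singleton,
      cnt_val]
    simp [n1, hy1y2, hz1y1.symm, hz2y1.symm]
  have cg_y2 : g.count y2 = 1 := by
    rw [hg, Multiset.count_add, Multiset.count_sub]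
    simp only [Multiset.insert_eq_cons, Multiset.count_cons, Multiset.count_singleton,
      cnt_val]
    simp [n2, hy1y2.symm, hz1y2.symm, hz2y2.symm]
  have cg1_y2 : g1.count y2 = 0 := by
    rw [hg1, Multiset.count_add, Multiset.count_sub]
    simp only [Multiset.count_singleton, cnt_val]
    simp [n5, hz1y2.symm]
  have cg2_y1 : g2.count y1 = 0 := by
    rw [hg2, Multiset.count_add, Multiset.count_sub]
    simp only [Multiset.count_singleton, cnt_val]
    simp [n6, hz2y1.symm]
  have cg1_z1 : g1.count z1 = 1 := by
    rw [hg1, Multiset.count_add, Multiset.count_sub]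
    simp only [Multiset.count_singleton, cnt_val]
    simp [n3]
  have cg2_z1 : g2.count z1 = 0 := by
    rw [hg2, Multiset.count_add, Multiset.count_sub]
    simp only [Multiset.count_singleton, cnt_val]
    simp [n8, hzz]
  have cg1_z2 : g1.count z2 = 0 := by
    rw [hg1, Multiset.count_add, Multiset.count_sub]
    simp only [Multiset.count_singleton, cnt_val]
    simp [n7, hzz.symm]
  have cei_z2 : ei.val.count z2 = 1 := by simp [cnt_val, hz2]
  have cei_z1 : ei.val.count z1 = 1 := by simp [cnt_val, hz1]
  have cei_y1 : ei.val.count y1 = 0 := by simp [cnt_val, n1]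
  -- distinctness of new edges
  have hgg1 : g ≠ g1 := fun h => by rw [h, cg1_y2] at cg_y2; exact zero_ne_one cg_y2
  have hgg2 : g ≠ g2 := fun h => by rw [h, cg2_y1] at cg_y1; exact zero_ne_one cg_y1
  have hg1g2 : g1 ≠ g2 := fun h => by rw [h, cg2_z1] at cg1_z1; exact zero_ne_one cg1_z1
  have heig : ei.val ≠ g := fun h => by
    rw [h, cg_y1] at cei_y1; exact one_ne_zero cei_y1
  have heig1 : ei.val ≠ g1 := fun h => by rw [h, cg1_z2] at cei_z2; exact zero_ne_one cei_z2
  have heig2 : ei.val ≠ g2 := fun h => by rw [h, cg2_z1] at cei_z1; exact zero_ne_one cei_z1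
  have hgE : g ∉ E := n9
  have hg1E : g1 ∉ E := n10
  have hg2E : g2 ∉ E := n11
  -- S ≤ E
  have hSnd : S.Nodup := by
    simp only [hS, Multiset.insert_eq_cons, Multiset.nodup_cons, Multiset.mem_cons,
      Multiset.mem_singleton, Multiset.nodup_singleton]
    refine ⟨?_, ?_, trivial⟩
    · push_neg
      exact ⟨fun h => heif1 (Finset.val_injective h), fun h => heif2 (Finset.val_injective h)⟩
    · exact fun h => hf1f2 (Finset.val_injective h)
  have hSle : S ≤ E := (Multiset.le_iff_subset hSnd).2 (by
    intro m hm
    simp only [hS, Multiset.insert_eq_cons, Multiset.mem_cons, Multiset.mem_singleton] at hm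
    rcases hm with h | h | h
    · exact h ▸ memE ei hei
    · exact h ▸ memE f1 hf1
    · exact h ▸ memE f2 hf2)
  have hRnd : (E - S).Nodup := sub_nodup hEnd S
  have memR_E : ∀ m ∈ E - S, m ∈ E := fun m hm =>
    Multiset.mem_of_le (Multiset.sub_le_self _ _) hm
  have heiR : ei.val ∉ E - S := by
    rw [← Multiset.count_eq_zero, Multiset.count_sub]
    have h1 : E.count ei.val = 1 := Multiset.count_eq_one_of_mem hEnd (memE ei hei)
    have h2 : 1 ≤ S.count ei.val := Multiset.one_le_count_iff_mem.mpr (by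
      simp [hS, Multiset.insert_eq_cons])
    omega
  -- nodup of new edges as vertex multisets
  have hYnd : ({y1, y2} : Multiset (Fin n)).Nodup := by
    simp [Multiset.insert_eq_cons, Multiset.nodup_cons, hy1y2]
  have hgnd : g.Nodup := by
    rw [hg, Multiset.nodup_add]
    refine ⟨sub_nodup ei.nodup _, hYnd, Multiset.disjoint_left.mpr ?_⟩
    intro a ha
    have haei : a ∈ ei := Multiset.mem_of_le (Multiset.sub_le_self _ _) ha
    simp only [Multiset.insert_eq_cons, Multiset.mem_cons, Multiset.mem_singleton]
    rintro (rfl | rfl)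
    exacts [n1 haei, n2 haei]
  have hg1nd : g1.Nodup := by
    rw [hg1, Multiset.nodup_add]
    refine ⟨sub_nodup f1.nodup _, Multiset.nodup_singleton z1,
      Multiset.disjoint_left.mpr ?_⟩
    intro a ha
    have haf1 : a ∈ f1 := Multiset.mem_of_le (Multiset.sub_le_self _ _) ha
    simp only [Multiset.mem_singleton]
    rintro rfl; exact n3 haf1
  have hg2nd : g2.Nodup := by
    rw [hg2, Multiset.nodup_add]
    refine ⟨sub_nodup f2.nodup _, Multiset.nodup_singleton z2,
      Multiset.disjoint_left.mpr ?_⟩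
    intro a ha
    have haf2 : a ∈ f2 := Multiset.mem_of_le (Multiset.sub_le_self _ _) ha
    simp only [Multiset.mem_singleton]
    rintro rfl; exact n4 haf2
  -- assemble
  have hres : fwdResult n Gs ei f1 f2 z1 z2 y1 y2 = (E - S) + {g, g1, g2} := rfl
  refine ⟨?_, ?_, ?_⟩
  · rw [hres, Multiset.nodup_add]
    refine ⟨hRnd, ?_, Multiset.disjoint_left.mpr ?_⟩
    · simp only [Multiset.insert_eq_cons, Multiset.nodup_cons, Multiset.mem_cons,
        Multiset.mem_singleton, Multiset.nodup_singleton]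
      exact ⟨by push_neg; exact ⟨hgg1, hgg2⟩, hg1g2, trivial⟩
    · intro m hm
      have hmE := memR_E m hm
      simp only [Multiset.insert_eq_cons, Multiset.mem_cons, Multiset.mem_singleton]
      rintro (rfl | rfl | rfl)
      exacts [hgE hmE, hg1E hmE, hg2E hmE]
  · intro m hm
    rw [hres, Multiset.mem_add] at hm
    rcases hm with hm | hm
    · obtain ⟨h, _, rfl⟩ := Multiset.mem_map.mp (memR_E m hm)
      exact h.nodup
    · simp only [Multiset.insert_eq_cons, Multiset.mem_cons, Multiset.mem_singleton] at hm
      rcases hm with rfl | rfl | rfl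
      exacts [hgnd, hg1nd, hg2nd]
  · rw [hres, Multiset.mem_add]
    rintro (h | h)
    · exact heiR h
    · simp only [Multiset.insert_eq_cons, Multiset.mem_cons, Multiset.mem_singleton] at h
      rcases h with h | h | h
      exacts [heig h, heig1 h, heig2 h]

end Legal
section Events

private instance QpDec {n : ℕ} (Gs : Finset (Finset (Fin n))) (ei : Finset (Fin n))
    (p : Pt n) : Decidable (Qp Gs ei p) :=
  inferInstanceAs (Decidable (_ ∧ _ ∧ _))

variable {n r : ℕ} {k : Fin n → ℕ} {Gs : Finset (Finset (Fin n))} {ei : Finset (Fin n)}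

private lemma qp_parts {p : Pt n} (h : Qp Gs ei p) :
    p.1 ∈ ei ∧ p.2.1 ∈ ei ∧ p.1 ≠ p.2.1 ∧ (p.2.2.2.2.1 ∈ Gs ∧ p.2.2.1 ∈ p.2.2.2.2.1)
      ∧ (p.2.2.2.2.2 ∈ Gs ∧ p.2.2.2.1 ∈ p.2.2.2.2.2) := by
  obtain ⟨h1, h2, h3⟩ := h
  obtain ⟨a, b, c⟩ := Finset.mem_offDiag.mp h1
  have h2' := (Finset.mem_filter.mp h2).2
  have h3' := (Finset.mem_filter.mp h3).2
  exact ⟨a, b, c, h2', h3'⟩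

private lemma offDiag_card_le (hu : isUniform n r Gs) (hei : ei ∈ Gs) :
    ei.offDiag.card ≤ r * r := by
  rw [Finset.offDiag_card, hu ei hei]; omega

private lemma card_T (hu : isUniform n r Gs) (hdeg : ∀ v, hDeg n Gs v = k v) (hei : ei ∈ Gs) :
    (Finset.univ.filter fun p : Pt n => Qp Gs ei p).card
      = (r * r - r) * (Mk n k * Mk n k) := by
  have h : (Finset.univ.filter fun p : Pt n => Qp Gs ei p).card
      = (ei.offDiag ×ˢ (Inc Gs ×ˢ Inc Gs)).card := by
    refine Finset.card_nbij' (fun p => (zp p, i1 p, i2 p))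
      (fun q => (q.1.1, q.1.2, q.2.1.1, q.2.2.1, q.2.1.2, q.2.2.2)) ?_ ?_ ?_ ?_
    · intro p hp
      have := (Finset.mem_filter.mp hp).2
      exact Finset.mem_product.mpr ⟨this.1, Finset.mem_product.mpr ⟨this.2.1, this.2.2⟩⟩
    · intro q hq
      simp only [Finset.mem_coe, Finset.mem_product] at hq
      simp only [Finset.mem_coe, Finset.mem_filter, Finset.mem_univ, true_and]
      exact ⟨hq.1, hq.2.1, hq.2.2⟩
    · intro p _; rfl
    · intro q _; rfl
  rw [h, Finset.card_product, Finset.card_product, Finset.offDiag_card, hu ei hei,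
    card_Inc Gs hdeg]

-- B1 : y1 ∈ ei
private lemma bndB1 (hu : isUniform n r Gs) (hdeg : ∀ v, hDeg n Gs v = k v) (hei : ei ∈ Gs) :
    (Finset.univ.filter fun p : Pt n => Qp Gs ei p ∧ p.2.2.1 ∈ ei).card
      ≤ (r * r) * ((r * kmax n k) * Mk n k) := by
  classical
  refine le_trans (tripleInj _ ei.offDiag ((Inc Gs).filter fun q => q.1 ∈ ei) (Inc Gs)
    (fun p hp => ⟨hp.1.1, Finset.mem_filter.mpr ⟨hp.1.2.1, hp.2⟩, hp.1.2.2⟩)) ?_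
  refine Nat.mul_le_mul (offDiag_card_le hu hei) (Nat.mul_le_mul ?_ (le_of_eq (card_Inc Gs hdeg)))
  refine le_trans (card_Inc_fst hdeg ei) ?_
  rw [hu ei hei]

-- B2 : y2 ∈ ei
private lemma bndB2 (hu : isUniform n r Gs) (hdeg : ∀ v, hDeg n Gs v = k v) (hei : ei ∈ Gs) :
    (Finset.univ.filter fun p : Pt n => Qp Gs ei p ∧ p.2.2.2.1 ∈ ei).card
      ≤ (r * r) * (Mk n k * (r * kmax n k)) := by
  classical
  refine le_trans (tripleInj _ ei.offDiag (Inc Gs) ((Inc Gs).filter fun q => q.1 ∈ ei)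
    (fun p hp => ⟨hp.1.1, hp.1.2.1, Finset.mem_filter.mpr ⟨hp.1.2.2, hp.2⟩⟩)) ?_
  refine Nat.mul_le_mul (offDiag_card_le hu hei) (Nat.mul_le_mul (le_of_eq (card_Inc Gs hdeg)) ?_)
  refine le_trans (card_Inc_fst hdeg ei) ?_
  rw [hu ei hei]

-- B3 : z1 ∈ f1
private lemma bndB3 (hu : isUniform n r Gs) (hdeg : ∀ v, hDeg n Gs v = k v) (hei : ei ∈ Gs) :
    (Finset.univ.filter fun p : Pt n => Qp Gs ei p ∧ p.1 ∈ p.2.2.2.2.1).card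
      ≤ (r * r) * ((kmax n k * r) * Mk n k) := by
  classical
  refine le_trans (peel _ zp ei.offDiag ((kmax n k * r) * Mk n k)
    (fun p hp => hp.1.1) (fun b _ => ?_))
    (Nat.mul_le_mul_right _ (offDiag_card_le hu hei))
  refine le_trans (pairInj23 _ b ((Inc Gs).filter fun q => b.1 ∈ q.2) (Inc Gs)
    (fun p hp => ⟨hp.2, Finset.mem_filter.mpr ⟨hp.1.1.2.1, by
      have : p.1 = b.1 := congrArg Prod.fst hp.2
      exact this ▸ hp.1.2⟩, hp.1.1.2.2⟩)) ?_
  exact Nat.mul_le_mul (card_Inc_snd hu hdeg b.1) (le_of_eq (card_Inc Gs hdeg))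

-- B4 : z2 ∈ f2
private lemma bndB4 (hu : isUniform n r Gs) (hdeg : ∀ v, hDeg n Gs v = k v) (hei : ei ∈ Gs) :
    (Finset.univ.filter fun p : Pt n => Qp Gs ei p ∧ p.2.1 ∈ p.2.2.2.2.2).card
      ≤ (r * r) * (Mk n k * (kmax n k * r)) := by
  classical
  refine le_trans (peel _ zp ei.offDiag (Mk n k * (kmax n k * r))
    (fun p hp => hp.1.1) (fun b _ => ?_))
    (Nat.mul_le_mul_right _ (offDiag_card_le hu hei))
  refine le_trans (pairInj23 _ b (Inc Gs) ((Inc Gs).filter fun q => b.2 ∈ q.2)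
    (fun p hp => ⟨hp.2, hp.1.1.2.1, Finset.mem_filter.mpr ⟨hp.1.1.2.2, by
      have : p.2.1 = b.2 := congrArg Prod.snd hp.2
      exact this ▸ hp.1.2⟩⟩)) ?_
  exact Nat.mul_le_mul (le_of_eq (card_Inc Gs hdeg)) (card_Inc_snd hu hdeg b.2)

-- B7 : z2 ∈ f1
private lemma bndB7 (hu : isUniform n r Gs) (hdeg : ∀ v, hDeg n Gs v = k v) (hei : ei ∈ Gs) :
    (Finset.univ.filter fun p : Pt n => Qp Gs ei p ∧ p.2.1 ∈ p.2.2.2.2.1).card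
      ≤ (r * r) * ((kmax n k * r) * Mk n k) := by
  classical
  refine le_trans (peel _ zp ei.offDiag ((kmax n k * r) * Mk n k)
    (fun p hp => hp.1.1) (fun b _ => ?_))
    (Nat.mul_le_mul_right _ (offDiag_card_le hu hei))
  refine le_trans (pairInj23 _ b ((Inc Gs).filter fun q => b.2 ∈ q.2) (Inc Gs)
    (fun p hp => ⟨hp.2, Finset.mem_filter.mpr ⟨hp.1.1.2.1, by
      have : p.2.1 = b.2 := congrArg Prod.snd hp.2
      exact this ▸ hp.1.2⟩, hp.1.1.2.2⟩)) ?_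
  exact Nat.mul_le_mul (card_Inc_snd hu hdeg b.2) (le_of_eq (card_Inc Gs hdeg))

-- B8 : z1 ∈ f2
private lemma bndB8 (hu : isUniform n r Gs) (hdeg : ∀ v, hDeg n Gs v = k v) (hei : ei ∈ Gs) :
    (Finset.univ.filter fun p : Pt n => Qp Gs ei p ∧ p.1 ∈ p.2.2.2.2.2).card
      ≤ (r * r) * (Mk n k * (kmax n k * r)) := by
  classical
  refine le_trans (peel _ zp ei.offDiag (Mk n k * (kmax n k * r))
    (fun p hp => hp.1.1) (fun b _ => ?_))
    (Nat.mul_le_mul_right _ (offDiag_card_le hu hei))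
  refine le_trans (pairInj23 _ b (Inc Gs) ((Inc Gs).filter fun q => b.1 ∈ q.2)
    (fun p hp => ⟨hp.2, hp.1.1.2.1, Finset.mem_filter.mpr ⟨hp.1.1.2.2, by
      have : p.1 = b.1 := congrArg Prod.fst hp.2
      exact this ▸ hp.1.2⟩⟩)) ?_
  exact Nat.mul_le_mul (le_of_eq (card_Inc Gs hdeg)) (card_Inc_snd hu hdeg b.1)

-- B5 : y2 ∈ f1
private lemma bndB5 (hu : isUniform n r Gs) (hdeg : ∀ v, hDeg n Gs v = k v) (hei : ei ∈ Gs) :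
    (Finset.univ.filter fun p : Pt n => Qp Gs ei p ∧ p.2.2.2.1 ∈ p.2.2.2.2.1).card
      ≤ Mk n k * ((r * r) * (r * kmax n k)) := by
  classical
  refine le_trans (peel _ i1 (Inc Gs) ((r * r) * (r * kmax n k))
    (fun p hp => hp.1.2.1) (fun b hb => ?_))
    (Nat.mul_le_mul_right _ (le_of_eq (card_Inc Gs hdeg)))
  have hbf : b.2 ∈ Gs := (Finset.mem_filter.mp hb).2.1
  refine le_trans (pairInj12 _ b ei.offDiag ((Inc Gs).filter fun q => q.1 ∈ b.2)
    (fun p hp => ⟨hp.1.1.1, hp.2, Finset.mem_filter.mpr ⟨hp.1.1.2.2, by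
      have : p.2.2.2.2.1 = b.2 := congrArg Prod.snd hp.2
      exact this ▸ hp.1.2⟩⟩)) ?_
  refine Nat.mul_le_mul (offDiag_card_le hu hei) ?_
  refine le_trans (card_Inc_fst hdeg b.2) ?_
  rw [hu b.2 hbf]

-- B6 : y1 ∈ f2
private lemma bndB6 (hu : isUniform n r Gs) (hdeg : ∀ v, hDeg n Gs v = k v) (hei : ei ∈ Gs) :
    (Finset.univ.filter fun p : Pt n => Qp Gs ei p ∧ p.2.2.1 ∈ p.2.2.2.2.2).card
      ≤ Mk n k * ((r * r) * (r * kmax n k)) := by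
  classical
  refine le_trans (peel _ i2 (Inc Gs) ((r * r) * (r * kmax n k))
    (fun p hp => hp.1.2.2) (fun b hb => ?_))
    (Nat.mul_le_mul_right _ (le_of_eq (card_Inc Gs hdeg)))
  have hbf : b.2 ∈ Gs := (Finset.mem_filter.mp hb).2.1
  refine le_trans (pairInj13 _ b ei.offDiag ((Inc Gs).filter fun q => q.1 ∈ b.2)
    (fun p hp => ⟨hp.1.1.1, Finset.mem_filter.mpr ⟨hp.1.1.2.1, by
      have : p.2.2.2.2.2 = b.2 := congrArg Prod.snd hp.2
      exact this ▸ hp.1.2⟩, hp.2⟩)) ?_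
  refine Nat.mul_le_mul (offDiag_card_le hu hei) ?_
  refine le_trans (card_Inc_fst hdeg b.2) ?_
  rw [hu b.2 hbf]

end Events
section HardEvents

variable {n r : ℕ} {k : Fin n → ℕ} {Gs : Finset (Finset (Fin n))} {ei : Finset (Fin n)}

private lemma tuple_ext6 {p q : Pt n} (e1 : p.1 = q.1) (e2 : p.2.1 = q.2.1)
    (e3 : p.2.2.1 = q.2.2.1) (e4 : p.2.2.2.1 = q.2.2.2.1)
    (e5 : p.2.2.2.2.1 = q.2.2.2.2.1) (e6 : p.2.2.2.2.2 = q.2.2.2.2.2) : p = q := by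
  obtain ⟨a,b,c,d,e,f⟩ := p; obtain ⟨a',b',c',d',e',f'⟩ := q
  simp_all

private lemma memE_eq {m : Multiset (Fin n)} (hm : m ∈ Gs.val.map Finset.val)
    {h' : Finset (Fin n)} (ht : m.toFinset = h') : m = h'.val := by
  obtain ⟨h, _, hval⟩ := Multiset.mem_map.mp hm
  rw [← hval] at ht ⊢
  rw [Finset.val_toFinset] at ht
  rw [ht]

private lemma memE_toFinset {m : Multiset (Fin n)} (hm : m ∈ Gs.val.map Finset.val) :
    m.toFinset ∈ Gs := by
  obtain ⟨h, hh, hval⟩ := Multiset.mem_map.mp hm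
  rw [← hval, Finset.val_toFinset]
  exact hh

-- B9 : (ei - {z1,z2} + {y1,y2}) is an edge of Gs
private lemma bndB9 (hu : isUniform n r Gs) (hdeg : ∀ v, hDeg n Gs v = k v)
    (hei : ei ∈ Gs) (hr : 3 ≤ r) :
    (Finset.univ.filter fun p : Pt n => Qp Gs ei p ∧
        (ei.val - {p.1, p.2.1} + {p.2.2.1, p.2.2.2.1}) ∈ Gs.val.map Finset.val).card
      ≤ (r * r) * (kmax n k * (r * (r * (kmax n k * (kmax n k * 1))))) := by
  classical
  refine le_trans (peel _ zp ei.offDiag _ (fun p hp => hp.1.1) (fun b hb => ?_))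
    (Nat.mul_le_mul_right _ (offDiag_card_le hu hei))
  obtain ⟨hb1, hb2, hbne⟩ := Finset.mem_offDiag.mp hb
  -- a vertex of ei different from b.1, b.2
  have hcard : 0 < ((ei.erase b.1).erase b.2).card := by
    rw [Finset.card_erase_of_mem (Finset.mem_erase.mpr ⟨fun h => hbne h.symm, hb2⟩),
      Finset.card_erase_of_mem hb1, hu ei hei]
    omega
  obtain ⟨w, hw⟩ := Finset.card_pos.mp hcard
  have hwb2 : w ≠ b.2 := (Finset.mem_erase.mp hw).1
  have hwb1 : w ≠ b.1 := (Finset.mem_erase.mp (Finset.mem_erase.mp hw).2).1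
  have hwei : w ∈ ei := Finset.mem_of_mem_erase (Finset.mem_of_mem_erase hw)
  refine le_trans (peel _ (fun p => (ei.val - {p.1, p.2.1} + {p.2.2.1, p.2.2.2.1}).toFinset)
    (Gs.filter fun e => w ∈ e) _ (fun p hp => ?_) (fun h' hh' => ?_))
    (Nat.mul_le_mul_right _ (deg_le_kmax hdeg w))
  · -- the witness edge contains w
    have hz1 : p.1 = b.1 := congrArg Prod.fst hp.2
    have hz2 : p.2.1 = b.2 := congrArg Prod.snd hp.2
    have hcnt : 1 ≤ Multiset.count w (ei.val - {p.1, p.2.1} + {p.2.2.1, p.2.2.2.1}) := by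
      rw [Multiset.count_add, Multiset.count_sub]
      have c1 : ei.val.count w = 1 := by simp [cnt_val, hwei]
      have c2 : Multiset.count w ({p.1, p.2.1} : Multiset (Fin n)) = 0 := by
        simp [Multiset.insert_eq_cons, Multiset.count_cons, Multiset.count_singleton,
          hz1, hz2, hwb1, hwb2]
      omega
    have hmem : w ∈ (ei.val - {p.1, p.2.1} + {p.2.2.1, p.2.2.2.1}) :=
      Multiset.one_le_count_iff_mem.mp hcnt
    exact Finset.mem_filter.mpr ⟨memE_toFinset hp.1.2, Multiset.mem_toFinset.mpr hmem⟩
  · have hh'Gs : h' ∈ Gs := (Finset.mem_filter.mp hh').1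
    have hh'card : h'.card = r := hu h' hh'Gs
    -- peel y1 ∈ h'
    refine le_trans (peel _ (fun p : Pt n => p.2.2.1) h' _ (fun p hp => ?_) (fun c hc => ?_))
      (Nat.mul_le_mul_right _ (le_of_eq hh'card))
    · have hgm : (ei.val - {p.1, p.2.1} + {p.2.2.1, p.2.2.2.1}) = h'.val :=
        memE_eq hp.1.1.2 hp.2
      have hcnt : 1 ≤ Multiset.count p.2.2.1 (ei.val - {p.1, p.2.1} + {p.2.2.1, p.2.2.2.1}) := by
        rw [Multiset.count_add]
        have : 1 ≤ Multiset.count p.2.2.1 ({p.2.2.1, p.2.2.2.1} : Multiset (Fin n)) := by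
          simp [Multiset.insert_eq_cons, Multiset.count_cons]
        omega
      rw [hgm] at hcnt
      exact Multiset.one_le_count_iff_mem.mp hcnt
    · -- peel y2 ∈ h'
      refine le_trans (peel _ (fun p : Pt n => p.2.2.2.1) h' _ (fun p hp => ?_) (fun c2 hc2 => ?_))
        (Nat.mul_le_mul_right _ (le_of_eq hh'card))
      · have hgm : (ei.val - {p.1, p.2.1} + {p.2.2.1, p.2.2.2.1}) = h'.val :=
          memE_eq hp.1.1.1.2 hp.1.2
        have hcnt : 1 ≤ Multiset.count p.2.2.2.1
            (ei.val - {p.1, p.2.1} + {p.2.2.1, p.2.2.2.1}) := by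
          rw [Multiset.count_add]
          have : 1 ≤ Multiset.count p.2.2.2.1 ({p.2.2.1, p.2.2.2.1} : Multiset (Fin n)) := by
            simp [Multiset.insert_eq_cons, Multiset.count_cons, Multiset.count_singleton]
          omega
        rw [hgm] at hcnt
        exact Multiset.one_le_count_iff_mem.mp hcnt
      · -- peel f1 ∋ y1 (= c)
        refine le_trans (peel _ (fun p : Pt n => p.2.2.2.2.1) (Gs.filter fun e => c ∈ e) _
          (fun p hp => ?_) (fun bf1 hbf1 => ?_))
          (Nat.mul_le_mul_right _ (deg_le_kmax hdeg c))
        · have hy1c : p.2.2.1 = c := hp.1.2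
          have hq := qp_parts hp.1.1.1.1.1
          exact Finset.mem_filter.mpr ⟨hq.2.2.2.1.1, hy1c ▸ hq.2.2.2.1.2⟩
        · -- peel f2 ∋ y2 (= c2), fiber ≤ 1
          refine le_trans (peel _ (fun p : Pt n => p.2.2.2.2.2) (Gs.filter fun e => c2 ∈ e) 1
            (fun p hp => ?_) (fun bf2 hbf2 => ?_))
            (Nat.mul_le_mul_right _ (deg_le_kmax hdeg c2))
          · have hy2c : p.2.2.2.1 = c2 := hp.1.2
            have hq := qp_parts hp.1.1.1.1.1.1
            exact Finset.mem_filter.mpr ⟨hq.2.2.2.2.1, hy2c ▸ hq.2.2.2.2.2⟩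
          · refine card_filter_le_one _ (fun p q hp hq => ?_)
            have hzp : zp p = zp q := hp.1.1.1.1.1.2.trans hq.1.1.1.1.1.2.symm
            have e1 : p.1 = q.1 := congrArg (Prod.fst : Fin n × Fin n → Fin n) hzp
            have e2 : p.2.1 = q.2.1 := congrArg (Prod.snd : Fin n × Fin n → Fin n) hzp
            exact tuple_ext6 e1 e2
              (hp.1.1.1.2.trans hq.1.1.1.2.symm) (hp.1.1.2.trans hq.1.1.2.symm)
              (hp.1.2.trans hq.1.2.symm) (hp.2.trans hq.2.symm)

end HardEvents
section HardEvents2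

variable {n r : ℕ} {k : Fin n → ℕ} {Gs : Finset (Finset (Fin n))} {ei : Finset (Fin n)}

-- B10 : f1 - y1 + z1 is an edge of Gs
private lemma bndB10 (hu : isUniform n r Gs) (hdeg : ∀ v, hDeg n Gs v = k v)
    (hei : ei ∈ Gs) (hr : 3 ≤ r) :
    (Finset.univ.filter fun p : Pt n => Qp Gs ei p ∧
        (p.2.2.2.2.1.val - {p.2.2.1} + {p.1}) ∈ Gs.val.map Finset.val).card
      ≤ Mk n k * ((r * r) * (kmax n k * (kmax n k * 1))) := by
  classical
  refine le_trans (peel _ i2 (Inc Gs) _ (fun p hp => hp.1.2.2) (fun b hb => ?_))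
    (Nat.mul_le_mul_right _ (le_of_eq (card_Inc Gs hdeg)))
  refine le_trans (peel _ zp ei.offDiag _ (fun p hp => hp.1.1.1) (fun b2 hb2 => ?_))
    (Nat.mul_le_mul_right _ (offDiag_card_le hu hei))
  refine le_trans (peel _ (fun p : Pt n => (p.2.2.2.2.1.val - {p.2.2.1} + {p.1}).toFinset)
    (Gs.filter fun e => b2.1 ∈ e) _ (fun p hp => ?_) (fun h' hh' => ?_))
    (Nat.mul_le_mul_right _ (deg_le_kmax hdeg b2.1))
  · have hz1 : p.1 = b2.1 := congrArg Prod.fst hp.2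
    have hcnt : 1 ≤ Multiset.count p.1 (p.2.2.2.2.1.val - {p.2.2.1} + {p.1}) := by
      rw [Multiset.count_add]
      have : Multiset.count p.1 ({p.1} : Multiset (Fin n)) = 1 := by simp
      omega
    have hmem := Multiset.one_le_count_iff_mem.mp hcnt
    exact Finset.mem_filter.mpr ⟨memE_toFinset hp.1.1.2,
      hz1 ▸ Multiset.mem_toFinset.mpr hmem⟩
  · have hh'Gs : h' ∈ Gs := (Finset.mem_filter.mp hh').1
    have hbz : b2.1 ∈ h' := (Finset.mem_filter.mp hh').2
    have hcard : 0 < (h'.erase b2.1).card := by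
      rw [Finset.card_erase_of_mem hbz, hu h' hh'Gs]; omega
    obtain ⟨w', hw'⟩ := Finset.card_pos.mp hcard
    have hw'b : w' ≠ b2.1 := (Finset.mem_erase.mp hw').1
    have hw'h : w' ∈ h' := Finset.mem_of_mem_erase hw'
    refine le_trans (peel _ (fun p : Pt n => p.2.2.2.2.1) (Gs.filter fun e => w' ∈ e) 1
      (fun p hp => ?_) (fun bf1 hbf1 => ?_))
      (Nat.mul_le_mul_right _ (deg_le_kmax hdeg w'))
    · have hgm : (p.2.2.2.2.1.val - {p.2.2.1} + {p.1}) = h'.val :=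
        memE_eq hp.1.1.1.2 hp.2
      have hz1 : p.1 = b2.1 := congrArg Prod.fst hp.1.2
      have c1 : Multiset.count w' h'.val = 1 := by simp [cnt_val, hw'h]
      have c2 : Multiset.count w' ({p.1} : Multiset (Fin n)) = 0 := by
        simp [Multiset.count_singleton, hz1, hw'b]
      have c3 : 1 ≤ Multiset.count w' (p.2.2.2.2.1.val - {p.2.2.1}) := by
        have := congrArg (Multiset.count w') hgm
        rw [Multiset.count_add, c2, c1] at this
        omega
      have hw'f1 : w' ∈ p.2.2.2.2.1 := Finset.mem_val.mp
        (Multiset.mem_of_le (Multiset.sub_le_self _ _) (Multiset.one_le_count_iff_mem.mp c3))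
      exact Finset.mem_filter.mpr ⟨(qp_parts hp.1.1.1.1).2.2.2.1.1, hw'f1⟩
    · refine card_filter_le_one _ (fun p q hp hq => ?_)
      have hi2 : i2 p = i2 q := hp.1.1.1.2.trans hq.1.1.1.2.symm
      have hzp : zp p = zp q := hp.1.1.2.trans hq.1.1.2.symm
      have e1 : p.1 = q.1 := congrArg (Prod.fst : Fin n × Fin n → Fin n) hzp
      have e2 : p.2.1 = q.2.1 := congrArg (Prod.snd : Fin n × Fin n → Fin n) hzp
      have e4 : p.2.2.2.1 = q.2.2.2.1 :=
        congrArg (Prod.fst : Fin n × Finset (Fin n) → Fin n) hi2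
      have e6 : p.2.2.2.2.2 = q.2.2.2.2.2 :=
        congrArg (Prod.snd : Fin n × Finset (Fin n) → Finset (Fin n)) hi2
      have e5 : p.2.2.2.2.1 = q.2.2.2.2.1 := hp.2.trans hq.2.symm
      have hgmp : (p.2.2.2.2.1.val - {p.2.2.1} + {p.1}) = h'.val :=
        memE_eq hp.1.1.1.1.2 hp.1.2
      have hgmq : (q.2.2.2.2.1.val - {q.2.2.1} + {q.1}) = h'.val :=
        memE_eq hq.1.1.1.1.2 hq.1.2
      have heq : p.2.2.2.2.1.val - {p.2.2.1} + {p.1}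
          = p.2.2.2.2.1.val - {q.2.2.1} + {p.1} := by
        rw [hgmp, ← hgmq, ← e5, ← e1]
      have hsub : p.2.2.2.2.1.val - {p.2.2.1} = p.2.2.2.2.1.val - {q.2.2.1} :=
        add_right_cancel heq
      have hy1p : p.2.2.1 ∈ p.2.2.2.2.1 := (qp_parts hp.1.1.1.1.1).2.2.2.1.2
      have e3 : p.2.2.1 = q.2.2.1 := by
        by_contra hne
        have := congrArg (Multiset.count p.2.2.1) hsub
        rw [Multiset.count_sub, Multiset.count_sub] at this
        have hc : p.2.2.2.2.1.val.count p.2.2.1 = 1 := by simp [cnt_val, hy1p]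
        have hc1 : Multiset.count p.2.2.1 ({p.2.2.1} : Multiset (Fin n)) = 1 := by simp
        have hc2 : Multiset.count p.2.2.1 ({q.2.2.1} : Multiset (Fin n)) = 0 := by
          simp [Multiset.count_singleton, hne]
        omega
      exact tuple_ext6 e1 e2 e3 e4 e5 e6

-- B11 : f2 - y2 + z2 is an edge of Gs
private lemma bndB11 (hu : isUniform n r Gs) (hdeg : ∀ v, hDeg n Gs v = k v)
    (hei : ei ∈ Gs) (hr : 3 ≤ r) :
    (Finset.univ.filter fun p : Pt n => Qp Gs ei p ∧
        (p.2.2.2.2.2.val - {p.2.2.2.1} + {p.2.1}) ∈ Gs.val.map Finset.val).card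
      ≤ Mk n k * ((r * r) * (kmax n k * (kmax n k * 1))) := by
  classical
  refine le_trans (peel _ i1 (Inc Gs) _ (fun p hp => hp.1.2.1) (fun b hb => ?_))
    (Nat.mul_le_mul_right _ (le_of_eq (card_Inc Gs hdeg)))
  refine le_trans (peel _ zp ei.offDiag _ (fun p hp => hp.1.1.1) (fun b2 hb2 => ?_))
    (Nat.mul_le_mul_right _ (offDiag_card_le hu hei))
  refine le_trans (peel _ (fun p : Pt n => (p.2.2.2.2.2.val - {p.2.2.2.1} + {p.2.1}).toFinset)
    (Gs.filter fun e => b2.2 ∈ e) _ (fun p hp => ?_) (fun h' hh' => ?_))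
    (Nat.mul_le_mul_right _ (deg_le_kmax hdeg b2.2))
  · have hz2 : p.2.1 = b2.2 := congrArg Prod.snd hp.2
    have hcnt : 1 ≤ Multiset.count p.2.1 (p.2.2.2.2.2.val - {p.2.2.2.1} + {p.2.1}) := by
      rw [Multiset.count_add]
      have : Multiset.count p.2.1 ({p.2.1} : Multiset (Fin n)) = 1 := by simp
      omega
    have hmem := Multiset.one_le_count_iff_mem.mp hcnt
    exact Finset.mem_filter.mpr ⟨memE_toFinset hp.1.1.2,
      hz2 ▸ Multiset.mem_toFinset.mpr hmem⟩
  · have hh'Gs : h' ∈ Gs := (Finset.mem_filter.mp hh').1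
    have hbz : b2.2 ∈ h' := (Finset.mem_filter.mp hh').2
    have hcard : 0 < (h'.erase b2.2).card := by
      rw [Finset.card_erase_of_mem hbz, hu h' hh'Gs]; omega
    obtain ⟨w', hw'⟩ := Finset.card_pos.mp hcard
    have hw'b : w' ≠ b2.2 := (Finset.mem_erase.mp hw').1
    have hw'h : w' ∈ h' := Finset.mem_of_mem_erase hw'
    refine le_trans (peel _ (fun p : Pt n => p.2.2.2.2.2) (Gs.filter fun e => w' ∈ e) 1
      (fun p hp => ?_) (fun bf2 hbf2 => ?_))
      (Nat.mul_le_mul_right _ (deg_le_kmax hdeg w'))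
    · have hgm : (p.2.2.2.2.2.val - {p.2.2.2.1} + {p.2.1}) = h'.val :=
        memE_eq hp.1.1.1.2 hp.2
      have hz2 : p.2.1 = b2.2 := congrArg Prod.snd hp.1.2
      have c1 : Multiset.count w' h'.val = 1 := by simp [cnt_val, hw'h]
      have c2 : Multiset.count w' ({p.2.1} : Multiset (Fin n)) = 0 := by
        simp [Multiset.count_singleton, hz2, hw'b]
      have c3 : 1 ≤ Multiset.count w' (p.2.2.2.2.2.val - {p.2.2.2.1}) := by
        have := congrArg (Multiset.count w') hgm
        rw [Multiset.count_add, c2, c1] at this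
        omega
      have hw'f2 : w' ∈ p.2.2.2.2.2 := Finset.mem_val.mp
        (Multiset.mem_of_le (Multiset.sub_le_self _ _) (Multiset.one_le_count_iff_mem.mp c3))
      exact Finset.mem_filter.mpr ⟨(qp_parts hp.1.1.1.1).2.2.2.2.1, hw'f2⟩
    · refine card_filter_le_one _ (fun p q hp hq => ?_)
      have hi1 : i1 p = i1 q := hp.1.1.1.2.trans hq.1.1.1.2.symm
      have hzp : zp p = zp q := hp.1.1.2.trans hq.1.1.2.symm
      have e1 : p.1 = q.1 := congrArg (Prod.fst : Fin n × Fin n → Fin n) hzp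
      have e2 : p.2.1 = q.2.1 := congrArg (Prod.snd : Fin n × Fin n → Fin n) hzp
      have e3 : p.2.2.1 = q.2.2.1 :=
        congrArg (Prod.fst : Fin n × Finset (Fin n) → Fin n) hi1
      have e5 : p.2.2.2.2.1 = q.2.2.2.2.1 :=
        congrArg (Prod.snd : Fin n × Finset (Fin n) → Finset (Fin n)) hi1
      have e6 : p.2.2.2.2.2 = q.2.2.2.2.2 := hp.2.trans hq.2.symm
      have hgmp : (p.2.2.2.2.2.val - {p.2.2.2.1} + {p.2.1}) = h'.val :=
        memE_eq hp.1.1.1.1.2 hp.1.2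
      have hgmq : (q.2.2.2.2.2.val - {q.2.2.2.1} + {q.2.1}) = h'.val :=
        memE_eq hq.1.1.1.1.2 hq.1.2
      have heq : p.2.2.2.2.2.val - {p.2.2.2.1} + {p.2.1}
          = p.2.2.2.2.2.val - {q.2.2.2.1} + {p.2.1} := by
        rw [hgmp, ← hgmq, ← e6, ← e2]
      have hsub : p.2.2.2.2.2.val - {p.2.2.2.1} = p.2.2.2.2.2.val - {q.2.2.2.1} :=
        add_right_cancel heq
      have hy2p : p.2.2.2.1 ∈ p.2.2.2.2.2 := (qp_parts hp.1.1.1.1.1).2.2.2.2.2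
      have e4 : p.2.2.2.1 = q.2.2.2.1 := by
        by_contra hne
        have := congrArg (Multiset.count p.2.2.2.1) hsub
        rw [Multiset.count_sub, Multiset.count_sub] at this
        have hc : p.2.2.2.2.2.val.count p.2.2.2.1 = 1 := by simp [cnt_val, hy2p]
        have hc1 : Multiset.count p.2.2.2.1 ({p.2.2.2.1} : Multiset (Fin n)) = 1 := by simp
        have hc2 : Multiset.count p.2.2.2.1 ({q.2.2.2.1} : Multiset (Fin n)) = 0 := by
          simp [Multiset.count_singleton, hne]
        omega
      exact tuple_ext6 e1 e2 e3 e4 e5 e6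

end HardEvents2
private lemma card_filter_or_le {α : Type*} [Fintype α]
    (P A B : α → Prop) [DecidablePred P] [DecidablePred A] [DecidablePred B] :
    (Finset.univ.filter fun x => P x ∧ (A x ∨ B x)).card
      ≤ (Finset.univ.filter fun x => P x ∧ A x).card
        + (Finset.univ.filter fun x => P x ∧ B x).card := by
  classical
  refine le_trans (Finset.card_le_card fun x hx => Finset.mem_union.mpr ?_)
    (Finset.card_union_le _ _)
  have hx := Finset.mem_filter.mp hx
  rcases hx.2.2 with h | h
  · exact Or.inl (Finset.mem_filter.mpr ⟨hx.1, hx.2.1, h⟩)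
  · exact Or.inr (Finset.mem_filter.mpr ⟨hx.1, hx.2.1, h⟩)

private instance SstarMemDec (n : ℕ) (Gs : Finset (Finset (Fin n)))
    (ei f1 f2 : Finset (Fin n)) (z1 z2 y1 y2 : Fin n) :
    Decidable (SstarMem n Gs ei f1 f2 z1 z2 y1 y2) := by
  unfold SstarMem; infer_instance

private instance fwdLegalDec (n : ℕ) (Gs : Finset (Finset (Fin n)))
    (ei f1 f2 : Finset (Fin n)) (z1 z2 y1 y2 : Fin n) :
    Decidable (fwdLegal n Gs ei f1 f2 z1 z2 y1 y2) := by
  unfold fwdLegal; infer_instance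

set_option maxHeartbeats 2000000 in
theorem stmt7 :
    ∃ C : ℝ, 0 < C ∧ ∃ δ : ℝ, 0 < δ ∧
      ∀ (n r : ℕ) (k : Fin n → ℕ) (Gs : Finset (Finset (Fin n))) (ei : Finset (Fin n)),
        3 ≤ n → 3 ≤ r → isUniform n r Gs → (∀ v, hDeg n Gs v = k v) → ei ∈ Gs →
        (r : ℝ) ^ 4 * (kmax n k : ℝ) ^ 3 ≤ δ * (Mk n k : ℝ) →
        |(({p ∈ Sstar n Gs ei |
              fwdLegal n Gs ei p.2.2.2.2.1 p.2.2.2.2.2 p.1 p.2.1 p.2.2.1 p.2.2.2.1}).ncard : ℝ)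
            - (r : ℝ) * ((r : ℝ) - 1) * (Mk n k : ℝ) ^ 2| ≤
          C * ((r : ℝ) * ((r : ℝ) - 1) * (Mk n k : ℝ) ^ 2) *
            ((kmax n k : ℝ) ^ 2 + (r : ℝ) * (kmax n k : ℝ)) / (Mk n k : ℝ) := by
  refine ⟨100, by norm_num, 1, one_pos, ?_⟩
  intro n r k Gs ei hn hr hu hdeg hei hM
  have hrpos : 0 < r := by omega
  -- abbreviations
  set K := kmax n k with hKdef
  set M := Mk n k with hMdef
  -- K ≥ 1
  have heicard : ei.card = r := hu ei hei
  obtain ⟨v, hv⟩ := Finset.card_pos.mp (show 0 < ei.card by omega)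
  have hdv : 1 ≤ hDeg n Gs v :=
    Finset.card_pos.mpr ⟨ei, Finset.mem_filter.mpr ⟨hei, hv⟩⟩
  have hK1 : 1 ≤ K := le_trans (by rw [← hdeg v]; exact hdv)
    (Finset.le_sup (Finset.mem_univ v))
  -- M ≥ r^4 K^3
  have hMn : r ^ 4 * K ^ 3 ≤ M := by
    have h : ((r ^ 4 * K ^ 3 : ℕ) : ℝ) ≤ (M : ℝ) := by push_cast; linarith
    exact_mod_cast h
  have hMpos : 0 < M :=
    lt_of_lt_of_le (Nat.mul_pos (pow_pos hrpos 4) (pow_pos hK1 3)) hMn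
  -- the legal set as a finset
  classical
  have hset : {p ∈ Sstar n Gs ei |
      fwdLegal n Gs ei p.2.2.2.2.1 p.2.2.2.2.2 p.1 p.2.1 p.2.2.1 p.2.2.2.1}
      = ↑(Finset.univ.filter fun p : Pt n => p ∈ Sstar n Gs ei ∧
          fwdLegal n Gs ei p.2.2.2.2.1 p.2.2.2.2.2 p.1 p.2.1 p.2.2.1 p.2.2.2.1) := by
    ext p
    simp only [Set.mem_setOf_eq, Finset.coe_filter, Finset.mem_univ, true_and,
      Set.mem_sep_iff]
  rw [hset, Set.ncard_coe_finset]
  set N := (Finset.univ.filter fun p : Pt n => p ∈ Sstar n Gs ei ∧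
      fwdLegal n Gs ei p.2.2.2.2.1 p.2.2.2.2.2 p.1 p.2.1 p.2.2.1 p.2.2.2.1).card with hNdef
  -- upper bound : N ≤ |T|
  have hNT : N ≤ (Finset.univ.filter fun p : Pt n => Qp Gs ei p).card := by
    refine Finset.card_le_card fun p hp => ?_
    have hp' := (Finset.mem_filter.mp hp).2
    obtain ⟨hzz, _, _, _, _, _, hf1, hf2, _, _, _, hz1, hz2, hy1, hy2⟩ :=
      (hp'.1 : SstarMem n Gs ei p.2.2.2.2.1 p.2.2.2.2.2 p.1 p.2.1 p.2.2.1 p.2.2.2.1)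
    exact Finset.mem_filter.mpr ⟨Finset.mem_univ _,
      Finset.mem_offDiag.mpr ⟨hz1, hz2, hzz⟩,
      Finset.mem_filter.mpr ⟨Finset.mem_univ _, hf1, hy1⟩,
      Finset.mem_filter.mpr ⟨Finset.mem_univ _, hf2, hy2⟩⟩
  -- the bad predicate
  set BadF : Pt n → Prop := fun p =>
    p.2.2.1 ∈ ei ∨ (p.2.2.2.1 ∈ ei ∨ (p.1 ∈ p.2.2.2.2.1 ∨ (p.2.1 ∈ p.2.2.2.2.2 ∨
    (p.2.2.2.1 ∈ p.2.2.2.2.1 ∨ (p.2.2.1 ∈ p.2.2.2.2.2 ∨ (p.2.1 ∈ p.2.2.2.2.1 ∨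
    (p.1 ∈ p.2.2.2.2.2 ∨
    ((ei.val - {p.1, p.2.1} + {p.2.2.1, p.2.2.2.1}) ∈ Gs.val.map Finset.val ∨
    ((p.2.2.2.2.1.val - {p.2.2.1} + {p.1}) ∈ Gs.val.map Finset.val ∨
    (p.2.2.2.2.2.val - {p.2.2.2.1} + {p.2.1}) ∈ Gs.val.map Finset.val)))))))))
    with hBadF
  -- split T
  have hsplit : (Finset.univ.filter fun p : Pt n => Qp Gs ei p).card
      ≤ (Finset.univ.filter fun p : Pt n => Qp Gs ei p ∧ ¬ BadF p).card
        + (Finset.univ.filter fun p : Pt n => Qp Gs ei p ∧ BadF p).card := by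
    refine le_trans (Finset.card_le_card fun p hp => Finset.mem_union.mpr ?_)
      (Finset.card_union_le _ _)
    have hp := Finset.mem_filter.mp hp
    by_cases hb : BadF p
    · exact Or.inr (Finset.mem_filter.mpr ⟨hp.1, hp.2, hb⟩)
    · exact Or.inl (Finset.mem_filter.mpr ⟨hp.1, hp.2, hb⟩)
  -- good tuples are legal
  have hgood : (Finset.univ.filter fun p : Pt n => Qp Gs ei p ∧ ¬ BadF p).card ≤ N := by
    refine Finset.card_le_card fun p hp => ?_
    have hp := (Finset.mem_filter.mp hp).2
    obtain ⟨hQ, hnb⟩ := hp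
    simp only [hBadF, not_or] at hnb
    obtain ⟨n1, n2, n3, n4, n5, n6, n7, n8, n9, n10, n11⟩ := hnb
    have := legal_of_good hei hQ.1 hQ.2.1 hQ.2.2 n1 n2 n3 n4 n5 n6 n7 n8 n9 n10 n11
    exact Finset.mem_filter.mpr ⟨Finset.mem_univ _, this.1, this.2⟩
  -- bad count
  have hbad : (Finset.univ.filter fun p : Pt n => Qp Gs ei p ∧ BadF p).card
      ≤ (r * r) * ((r * K) * M) + ((r * r) * (M * (r * K)) + ((r * r) * ((K * r) * M)
        + ((r * r) * (M * (K * r)) + (M * ((r * r) * (r * K)) + (M * ((r * r) * (r * K))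
        + ((r * r) * ((K * r) * M) + ((r * r) * (M * (K * r))
        + ((r * r) * (K * (r * (r * (K * (K * 1)))))
        + (M * ((r * r) * (K * (K * 1))) + M * ((r * r) * (K * (K * 1)))))))))))) := by
    refine le_trans (card_filter_or_le _ _ _) (add_le_add (bndB1 hu hdeg hei) ?_)
    refine le_trans (card_filter_or_le _ _ _) (add_le_add (bndB2 hu hdeg hei) ?_)
    refine le_trans (card_filter_or_le _ _ _) (add_le_add (bndB3 hu hdeg hei) ?_)
    refine le_trans (card_filter_or_le _ _ _) (add_le_add (bndB4 hu hdeg hei) ?_)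
    refine le_trans (card_filter_or_le _ _ _) (add_le_add (bndB5 hu hdeg hei) ?_)
    refine le_trans (card_filter_or_le _ _ _) (add_le_add (bndB6 hu hdeg hei) ?_)
    refine le_trans (card_filter_or_le _ _ _) (add_le_add (bndB7 hu hdeg hei) ?_)
    refine le_trans (card_filter_or_le _ _ _) (add_le_add (bndB8 hu hdeg hei) ?_)
    refine le_trans (card_filter_or_le _ _ _) (add_le_add (bndB9 hu hdeg hei hr) ?_)
    exact le_trans (card_filter_or_le _ _ _)
      (add_le_add (bndB10 hu hdeg hei hr) (bndB11 hu hdeg hei hr))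
  -- put together in ℕ
  have hT := card_T hu hdeg hei
  have hNle : N ≤ (r * r - r) * (M * M) := hT ▸ hNT
  have hkey := le_trans (le_of_eq hT.symm) (le_trans hsplit (add_le_add hgood hbad))
  -- move to ℝ
  have hrr : r ≤ r * r := Nat.le_mul_of_pos_left r hrpos
  have hXcast : (((r * r - r) * (M * M) : ℕ) : ℝ)
      = (r : ℝ) * ((r : ℝ) - 1) * (M : ℝ) ^ 2 := by
    push_cast [Nat.cast_sub hrr]
    ring
  have hNR : (N : ℝ) ≤ (r : ℝ) * ((r : ℝ) - 1) * (M : ℝ) ^ 2 := by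
    rw [← hXcast]; exact_mod_cast hNle
  have hkeyR : (r : ℝ) * ((r : ℝ) - 1) * (M : ℝ) ^ 2
      ≤ (N : ℝ) + (8 * (r : ℝ) ^ 3 * (K : ℝ) * (M : ℝ) + (r : ℝ) ^ 4 * (K : ℝ) ^ 3
        + 2 * (r : ℝ) ^ 2 * (K : ℝ) ^ 2 * (M : ℝ)) := by
    have h := (Nat.cast_le (α := ℝ)).mpr hkey
    rw [hXcast] at h
    push_cast at h
    ring_nf at h ⊢
    linarith
  -- final arithmetic
  have hMR : (1 : ℝ) ≤ (M : ℝ) := by exact_mod_cast hMpos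
  have hKR : (1 : ℝ) ≤ (K : ℝ) := by exact_mod_cast hK1
  have hrR : (3 : ℝ) ≤ (r : ℝ) := by exact_mod_cast hr
  have hMbig : (r : ℝ) ^ 4 * (K : ℝ) ^ 3 ≤ (M : ℝ) := by
    have := (Nat.cast_le (α := ℝ)).mpr hMn; push_cast at this; linarith
  have hRHS : 100 * ((r : ℝ) * ((r : ℝ) - 1) * (M : ℝ) ^ 2)
        * ((K : ℝ) ^ 2 + (r : ℝ) * (K : ℝ)) / (M : ℝ)
      = 100 * ((r : ℝ) * ((r : ℝ) - 1)) * (M : ℝ) * ((K : ℝ) ^ 2 + (r : ℝ) * (K : ℝ)) := by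
    field_simp
  clear_value N K M
  clear hset hNdef hNT hsplit hgood hbad hkey hT hNle hBadF
  clear BadF
  rw [abs_sub_comm, abs_of_nonneg (by linarith : (0:ℝ) ≤ (r : ℝ) * ((r : ℝ) - 1) * (M : ℝ) ^ 2 - N)]
  rw [hRHS]
  have h2rr : (r:ℝ)^2 ≤ 2*((r:ℝ)*((r:ℝ)-1)) := by nlinarith
  have hposA : (0:ℝ) < (r:ℝ)*((r:ℝ)-1) := by nlinarith
  have hA6 : (6:ℝ) ≤ (r:ℝ)*((r:ℝ)-1) := by nlinarith
  have hS4 : (4:ℝ) ≤ (K:ℝ)^2 + (r:ℝ)*(K:ℝ) := by nlinarith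
  have h1' := mul_le_mul_of_nonneg_right h2rr
    (show (0:ℝ) ≤ (r:ℝ)*(K:ℝ)*(M:ℝ) by positivity)
  have h2' := mul_le_mul_of_nonneg_right h2rr
    (show (0:ℝ) ≤ (K:ℝ)^2*(M:ℝ) by positivity)
  have h4 : (M:ℝ) ≤ (M:ℝ) * (((r:ℝ)*((r:ℝ)-1)) * ((K:ℝ)^2 + (r:ℝ)*(K:ℝ))) := by
    nlinarith [mul_le_mul hA6 hS4 (by norm_num) (by linarith : (0:ℝ) ≤ (r:ℝ)*((r:ℝ)-1)),
      mul_le_mul_of_nonneg_left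
        (show (1:ℝ) ≤ ((r:ℝ)*((r:ℝ)-1)) * ((K:ℝ)^2 + (r:ℝ)*(K:ℝ)) by nlinarith)
        (show (0:ℝ) ≤ (M:ℝ) by linarith)]
  have hA : (0:ℝ) ≤ ((r:ℝ)*((r:ℝ)-1))*(M:ℝ)*((r:ℝ)*(K:ℝ)) := by
    have : (0:ℝ) ≤ (r:ℝ)*(K:ℝ) := by positivity
    nlinarith
  have hB : (0:ℝ) ≤ ((r:ℝ)*((r:ℝ)-1))*(M:ℝ)*(K:ℝ)^2 := by
    have : (0:ℝ) ≤ (K:ℝ)^2 := by positivity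
    nlinarith
  have hbound : 8 * (r : ℝ) ^ 3 * (K : ℝ) * (M : ℝ) + (r : ℝ) ^ 4 * (K : ℝ) ^ 3
      + 2 * (r : ℝ) ^ 2 * (K : ℝ) ^ 2 * (M : ℝ)
      ≤ 100 * ((r : ℝ) * ((r : ℝ) - 1)) * (M : ℝ) * ((K : ℝ) ^ 2 + (r : ℝ) * (K : ℝ)) := by
    nlinarith [h1', h2', hMbig, h4, hA, hB]
  linarith
end

section
/- There exist absolute constants C > 0 and δ > 0 with the following property. Let n ≥ 3, r ≥ 3, let k = (k_1,…,k_n) be a sequence of non-negative integers, and let e_i be an r-element subset of V. Let F_i ⊆ H_r(k) be the set of hypergraphs containing e_i and F_i^c ⊆ H_r(k) the set of hypergraphs not containing e_i. If r^4·k_max^3 ≤ δ·M(k), then |F_i| ≤ C·|F_i^c|·(k_max^3/M(k)^2 + r·k_max^4/M(k)^3). -/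
def HrSet (n r : ℕ) (k : Fin n → ℕ) : Set (Finset (Finset (Fin n))) :=
  {H | isUniform n r H ∧ ∀ v, hDeg n H v = k v}

open Finset

namespace Stmt10

variable {n : ℕ}

/-- pairs (f,v), f ∈ H, v ∈ f -/
def Pr (H : Finset (Finset (Fin n))) : Finset (Finset (Fin n) × Fin n) :=
  (H ×ˢ univ).filter fun p => p.2 ∈ p.1

lemma mem_Pr {H : Finset (Finset (Fin n))} {p} : p ∈ Pr H ↔ p.1 ∈ H ∧ p.2 ∈ p.1 := by
  simp [Pr, Finset.mem_filter, Finset.mem_product]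

lemma card_Pr {r : ℕ} {k : Fin n → ℕ} {H : Finset (Finset (Fin n))}
    (hU : isUniform n r H) (hd : ∀ v, hDeg n H v = k v) : (Pr H).card = Mk n k := by
  have h1 : (Pr H).card = ∑ f ∈ H, f.card := by
    rw [Pr, card_filter, Finset.sum_product]
    refine Finset.sum_congr rfl fun f hf => ?_
    rw [← card_filter]
    congr 1
    ext v; simp
  have h2 : ∑ f ∈ H, f.card = ∑ v : Fin n, hDeg n H v := by
    have : ∀ f ∈ H, f.card = ∑ v : Fin n, if v ∈ f then 1 else 0 := by
      intro f _
      rw [← card_filter]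
      congr 1; ext v; simp
    rw [Finset.sum_congr rfl this, Finset.sum_comm]
    refine Finset.sum_congr rfl fun v _ => ?_
    rw [hDeg, card_filter]
  rw [h1, h2, Mk]
  exact Finset.sum_congr rfl fun v _ => hd v

variable {r K : ℕ} {k : Fin n → ℕ} {H : Finset (Finset (Fin n))}

lemma erase_inj' {f : Finset (Fin n)} {v w : Fin n} (hv : v ∈ f)
    (h : f.erase v = f.erase w) : v = w := by
  by_contra hne
  have : v ∈ f.erase w := Finset.mem_erase.2 ⟨hne, hv⟩
  rw [← h] at this
  exact (Finset.mem_erase.1 this).1 rfl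

variable {r K : ℕ} {k : Fin n → ℕ} {H : Finset (Finset (Fin n))}

lemma card_filter_le_of_subset {α : Type*} (s : Finset α) {p q : α → Prop}
    [DecidablePred p] [DecidablePred q] (h : ∀ a ∈ s, p a → q a) :
    (s.filter p).card ≤ (s.filter q).card :=
  Finset.card_le_card (fun a ha => by
    simp only [Finset.mem_filter] at ha ⊢; exact ⟨ha.1, h a ha.1 ha.2⟩)

/-- pairs with first component a fixed set -/
lemma Pr_fst_eq (e0 : Finset (Fin n)) :
    ((Pr H).filter fun p => p.1 = e0).card ≤ e0.card := by
  classical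
  apply Finset.card_le_card_of_injOn (fun p => p.2)
  · intro p hp
    simp only [Finset.mem_coe, Finset.mem_filter] at hp
    exact hp.2 ▸ (mem_Pr.1 hp.1).2
  · intro p hp q hq h
    simp only [Finset.coe_filter, Set.mem_setOf_eq] at hp hq
    exact Prod.ext (hp.2.trans hq.2.symm) h

/-- pairs with second component a fixed vertex -/
lemma Pr_snd_eq (v0 : Fin n) :
    ((Pr H).filter fun p => p.2 = v0).card ≤ hDeg n H v0 := by
  classical
  apply Finset.card_le_card_of_injOn (fun p => p.1)
  · intro p hp
    simp only [Finset.mem_coe, Finset.mem_filter] at hp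
    simp only [hDeg, Finset.mem_coe, Finset.mem_filter]
    exact ⟨(mem_Pr.1 hp.1).1, hp.2 ▸ (mem_Pr.1 hp.1).2⟩
  · intro p hp q hq h
    simp only [Finset.coe_filter, Set.mem_setOf_eq] at hp hq
    exact Prod.ext h (hp.2.trans hq.2.symm)

/-- pairs with second component in a fixed set -/
lemma Pr_snd_mem (hdK : ∀ v, hDeg n H v ≤ K) (s : Finset (Fin n)) :
    ((Pr H).filter fun p => p.2 ∈ s).card ≤ K * s.card := by
  classical
  apply Finset.card_le_mul_card_image_of_maps_to (f := fun p => p.2) (t := s)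
  · intro p hp; exact (Finset.mem_filter.1 hp).2
  · intro v _
    calc ((((Pr H).filter fun p => p.2 ∈ s)).filter fun p => p.2 = v).card
        ≤ ((Pr H).filter fun p => p.2 = v).card := by
          rw [Finset.filter_filter]
          exact card_filter_le_of_subset _ (fun a _ h => h.2)
      _ ≤ K := (Pr_snd_eq v).trans (hdK v)

/-- pairs whose first component contains a fixed vertex -/
lemma Pr_fst_mem (hU : isUniform n r H) (u : Fin n) :
    ((Pr H).filter fun p => u ∈ p.1).card ≤ r * hDeg n H u := by
  classical
  apply Finset.card_le_mul_card_image_of_maps_to (f := fun p => p.1)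
    (t := H.filter fun f => u ∈ f)
  · intro p hp
    simp only [Finset.mem_filter] at hp ⊢
    exact ⟨(mem_Pr.1 hp.1).1, hp.2⟩
  · intro f hf
    simp only [Finset.mem_filter] at hf
    calc ((((Pr H).filter fun p => u ∈ p.1)).filter fun p => p.1 = f).card
        ≤ ((Pr H).filter fun p => p.1 = f).card := by
          rw [Finset.filter_filter]
          exact card_filter_le_of_subset _ (fun a _ h => h.2)
      _ ≤ f.card := Pr_fst_eq f
      _ = r := hU f hf.1

/-- edges containing a nonempty set -/
lemma card_superset {S : Finset (Fin n)} {y : Fin n} (hy : y ∈ S) :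
    (H.filter fun f => S ⊆ f).card ≤ hDeg n H y :=
  card_filter_le_of_subset _ (fun f _ h => h hy)

/-- the switch-count: pairs (f,v) with u ∉ f and f - v + u ∈ H -/
lemma Pr_switch (hU : isUniform n r H) (hr : 2 ≤ r) (hdK : ∀ v, hDeg n H v ≤ K)
    (u : Fin n) :
    ((Pr H).filter fun p => u ∉ p.1 ∧ insert u (p.1.erase p.2) ∈ H).card ≤ K * K := by
  classical
  have hmain : ((Pr H).filter fun p => u ∉ p.1 ∧ insert u (p.1.erase p.2) ∈ H).card
      ≤ K * (H.filter fun g => u ∈ g).card := by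
    apply Finset.card_le_mul_card_image_of_maps_to
      (f := fun p => insert u (p.1.erase p.2)) (t := H.filter fun g => u ∈ g)
    · intro p hp
      simp only [Finset.mem_filter] at hp ⊢
      exact ⟨hp.2.2, Finset.mem_insert_self _ _⟩
    · intro g hg
      simp only [Finset.mem_filter] at hg
      have hgcard : g.card = r := hU g hg.1
      have hne : (g.erase u).Nonempty := by
        rw [← Finset.card_pos, Finset.card_erase_of_mem hg.2, hgcard]
        omega
      obtain ⟨y, hy⟩ := hne
      calc ((((Pr H).filter fun p => u ∉ p.1 ∧ insert u (p.1.erase p.2) ∈ H)).filter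
              fun p => insert u (p.1.erase p.2) = g).card
          ≤ (H.filter fun f => g.erase u ⊆ f).card := by
            apply Finset.card_le_card_of_injOn (fun p => p.1)
            · intro p hp
              simp only [Finset.mem_coe, Finset.mem_filter] at hp ⊢
              obtain ⟨⟨hpP, hunotin, _⟩, hpg⟩ := hp
              refine ⟨(mem_Pr.1 hpP).1, ?_⟩
              have : g.erase u = p.1.erase p.2 := by
                rw [← hpg, Finset.erase_insert]
                intro hmem
                exact hunotin (Finset.mem_of_mem_erase hmem)
              rw [this]
              exact Finset.erase_subset _ _
            · intro p hp q hq h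
              simp only [Finset.coe_filter, Set.mem_setOf_eq, Finset.mem_filter] at hp hq
              obtain ⟨⟨hpP, hup, _⟩, hpg⟩ := hp
              obtain ⟨⟨hqP, huq, _⟩, hqg⟩ := hq
              have hff : p.1 = q.1 := h
              refine Prod.ext hff ?_
              have h2 : p.1.erase p.2 = q.1.erase q.2 := by
                have e1 : p.1.erase p.2 = (insert u (p.1.erase p.2)).erase u :=
                  (Finset.erase_insert (fun hm => hup (Finset.mem_of_mem_erase hm))).symm
                have e2 : q.1.erase q.2 = (insert u (q.1.erase q.2)).erase u :=
                  (Finset.erase_insert (fun hm => huq (Finset.mem_of_mem_erase hm))).symm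
                rw [e1, e2, hpg, hqg]
              rw [hff] at h2
              exact erase_inj' (hff ▸ (mem_Pr.1 hpP).2) h2
        _ ≤ hDeg n H y := card_superset hy
        _ ≤ K := hdK y
  refine hmain.trans (Nat.mul_le_mul_left K ?_)
  exact hdK u


def ePf (ei : Finset (Fin n)) (u1 u2 v1 v2 : Fin n) : Finset (Fin n) :=
  (ei \ {u1, u2}) ∪ {v1, v2}

def gPf (f1 : Finset (Fin n)) (u1 v1 : Fin n) : Finset (Fin n) :=
  insert u1 (f1.erase v1)

def valid (H : Finset (Finset (Fin n))) (ei : Finset (Fin n))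
    (u1 u2 v1 v2 : Fin n) (f1 f2 : Finset (Fin n)) : Prop :=
  f1 ≠ ei ∧ f2 ≠ ei ∧ f1 ≠ f2 ∧ u1 ∉ f1 ∧ u2 ∉ f2 ∧ u1 ∉ f2 ∧ u2 ∉ f1 ∧
  v1 ∉ ei ∧ v2 ∉ ei ∧ v1 ≠ v2 ∧ v1 ∉ f2 ∧ v2 ∉ f1 ∧
  ePf ei u1 u2 v1 v2 ∉ H ∧ gPf f1 u1 v1 ∉ H ∧ gPf f2 u2 v2 ∉ H

def swH (H ei : Finset (Finset (Fin n))) : Unit := ()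

lemma mem_ePf {ei : Finset (Fin n)} {u1 u2 v1 v2 w : Fin n} :
    w ∈ ePf ei u1 u2 v1 v2 ↔ (w ∈ ei ∧ w ≠ u1 ∧ w ≠ u2) ∨ w = v1 ∨ w = v2 := by
  simp [ePf, and_assoc]
  tauto

lemma mem_gPf {f1 : Finset (Fin n)} {u1 v1 w : Fin n} :
    w ∈ gPf f1 u1 v1 ↔ w = u1 ∨ (w ∈ f1 ∧ w ≠ v1) := by
  simp [gPf, Finset.mem_insert, Finset.mem_erase, and_comm]

lemma ePf_card {r : ℕ} {ei : Finset (Fin n)} {u1 u2 v1 v2 : Fin n}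
    (hcard : ei.card = r) (hu1 : u1 ∈ ei) (hu2 : u2 ∈ ei) (hu12 : u1 ≠ u2)
    (hv1 : v1 ∉ ei) (hv2 : v2 ∉ ei) (hv12 : v1 ≠ v2) :
    (ePf ei u1 u2 v1 v2).card = r := by
  have hsub : {u1, u2} ⊆ ei := by
    intro x hx
    rcases Finset.mem_insert.1 hx with h | h
    · exact h ▸ hu1
    · exact (Finset.mem_singleton.1 h) ▸ hu2
  have hdisj : Disjoint (ei \ {u1, u2}) ({v1, v2} : Finset (Fin n)) := by
    rw [Finset.disjoint_right]
    intro x hx hx2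
    rcases Finset.mem_insert.1 hx with h | h
    · exact hv1 (h ▸ (Finset.mem_sdiff.1 hx2).1)
    · exact hv2 ((Finset.mem_singleton.1 h) ▸ (Finset.mem_sdiff.1 hx2).1)
  rw [ePf, Finset.card_union_of_disjoint hdisj, Finset.card_sdiff_of_subset hsub,
    Finset.card_pair hu12, Finset.card_pair hv12, hcard]
  have : 2 ≤ r := by
    have := Finset.card_le_card hsub
    rw [Finset.card_pair hu12, hcard] at this
    exact this
  omega

lemma gPf_card {r : ℕ} {f1 : Finset (Fin n)} {u1 v1 : Fin n}
    (hcard : f1.card = r) (hv : v1 ∈ f1) (hu : u1 ∉ f1) :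
    (gPf f1 u1 v1).card = r := by
  rw [gPf, Finset.card_insert_of_notMem (fun h => hu (Finset.mem_of_mem_erase h)),
    Finset.card_erase_of_mem hv, hcard]
  have : 1 ≤ r := by
    rw [← hcard]
    exact Finset.card_pos.2 ⟨v1, hv⟩
  omega


def swHf (H : Finset (Finset (Fin n))) (ei f1 f2 : Finset (Fin n))
    (u1 u2 v1 v2 : Fin n) : Finset (Finset (Fin n)) :=
  insert (ePf ei u1 u2 v1 v2) (insert (gPf f1 u1 v1) (insert (gPf f2 u2 v2)
    (((H.erase ei).erase f1).erase f2)))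

section Switch

variable {ei f1 f2 : Finset (Fin n)} {u1 u2 v1 v2 : Fin n}

lemma chi_key (hU : isUniform n r H) (heiH : ei ∈ H) (hf1H : f1 ∈ H) (hf2H : f2 ∈ H)
    (hu1 : u1 ∈ ei) (hu2 : u2 ∈ ei) (hu12 : u1 ≠ u2)
    (hv1f1 : v1 ∈ f1) (hv2f2 : v2 ∈ f2)
    (hval : valid H ei u1 u2 v1 v2 f1 f2) (w : Fin n) :
    (if w ∈ ePf ei u1 u2 v1 v2 then 1 else 0) + ((if w ∈ gPf f1 u1 v1 then 1 else 0)
      + (if w ∈ gPf f2 u2 v2 then 1 else 0)) =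
    (if w ∈ ei then 1 else 0) + ((if w ∈ f1 then 1 else 0) + (if w ∈ f2 then 1 else 0)) := by
  obtain ⟨hf1ei, hf2ei, hf12, hu1f1, hu2f2, hu1f2, hu2f1, hv1ei, hv2ei, hv12,
    hv1f2, hv2f1, hePH, hg1H, hg2H⟩ := hval
  have hu1v1 : u1 ≠ v1 := fun h => hv1ei (h ▸ hu1)
  have hu1v2 : u1 ≠ v2 := fun h => hv2ei (h ▸ hu1)
  have hu2v1 : u2 ≠ v1 := fun h => hv1ei (h ▸ hu2)
  have hu2v2 : u2 ≠ v2 := fun h => hv2ei (h ▸ hu2)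
  by_cases hw1 : w = u1
  · subst hw1
    simp [mem_ePf, mem_gPf, hu1, hu1f1, hu1f2, hu1v1, hu1v2, hu12]
  by_cases hw2 : w = u2
  · subst hw2
    simp [mem_ePf, mem_gPf, hu2, hu2f1, hu2f2, hu2v1, hu2v2, Ne.symm hu12]
  by_cases hw3 : w = v1
  · subst hw3
    simp [mem_ePf, mem_gPf, hv1ei, hv1f1, hv1f2, Ne.symm hu1v1, Ne.symm hu2v1, hv12]
  by_cases hw4 : w = v2
  · subst hw4
    simp [mem_ePf, mem_gPf, hv2ei, hv2f1, hv2f2, Ne.symm hu1v2, Ne.symm hu2v2, Ne.symm hv12]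
  · simp [mem_ePf, mem_gPf, hw1, hw2, hw3, hw4]

lemma switch_main (hr : 3 ≤ r) (hU : isUniform n r H) (heiH : ei ∈ H)
    (hf1H : f1 ∈ H) (hf2H : f2 ∈ H)
    (hu1 : u1 ∈ ei) (hu2 : u2 ∈ ei) (hu12 : u1 ≠ u2)
    (hv1f1 : v1 ∈ f1) (hv2f2 : v2 ∈ f2)
    (hval : valid H ei u1 u2 v1 v2 f1 f2) :
    isUniform n r (swHf H ei f1 f2 u1 u2 v1 v2) ∧
    (∀ w, hDeg n (swHf H ei f1 f2 u1 u2 v1 v2) w = hDeg n H w) ∧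
    ei ∉ swHf H ei f1 f2 u1 u2 v1 v2 ∧
    ((((swHf H ei f1 f2 u1 u2 v1 v2).erase (ePf ei u1 u2 v1 v2)).erase
        (gPf f1 u1 v1)).erase (gPf f2 u2 v2)) = ((H.erase ei).erase f1).erase f2 := by
  obtain ⟨hf1ei, hf2ei, hf12, hu1f1, hu2f2, hu1f2, hu2f1, hv1ei, hv2ei, hv12,
    hv1f2, hv2f1, hePH, hg1H, hg2H⟩ := hval
  have hu1v1 : u1 ≠ v1 := fun h => hv1ei (h ▸ hu1)
  have hu1v2 : u1 ≠ v2 := fun h => hv2ei (h ▸ hu1)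
  have hu2v1 : u2 ≠ v1 := fun h => hv1ei (h ▸ hu2)
  have hu2v2 : u2 ≠ v2 := fun h => hv2ei (h ▸ hu2)
  set eP := ePf ei u1 u2 v1 v2 with heP
  set G1 := gPf f1 u1 v1 with hG1
  set G2 := gPf f2 u2 v2 with hG2
  set H0 := ((H.erase ei).erase f1).erase f2 with hH0
  have hmemH0 : ∀ X, X ∈ H0 ↔ X ∈ H ∧ X ≠ ei ∧ X ≠ f1 ∧ X ≠ f2 := by
    intro X
    simp only [hH0, Finset.mem_erase]
    tauto
  have hu1G1 : u1 ∈ G1 := Finset.mem_insert_self _ _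
  have hu2G2 : u2 ∈ G2 := Finset.mem_insert_self _ _
  have hu1eP : u1 ∉ eP := by
    rw [heP, mem_ePf]
    push_neg
    exact ⟨fun _ h => absurd rfl h, hu1v1, hu1v2⟩
  have hu2eP : u2 ∉ eP := by
    rw [heP, mem_ePf]
    push_neg
    exact ⟨fun _ _ => rfl, hu2v1, hu2v2⟩
  have hu1G2 : u1 ∉ G2 := by
    rw [hG2, mem_gPf]
    push_neg
    exact ⟨hu12, fun h => absurd h hu1f2⟩
  have hePG1 : eP ≠ G1 := fun h => hu1eP (h ▸ hu1G1)
  have hePG2 : eP ≠ G2 := fun h => hu2eP (h ▸ hu2G2)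
  have hG1G2 : G1 ≠ G2 := fun h => hu1G2 (h ▸ hu1G1)
  have hePH0 : eP ∉ H0 := fun h => hePH ((hmemH0 _).1 h).1
  have hG1H0 : G1 ∉ H0 := fun h => hg1H ((hmemH0 _).1 h).1
  have hG2H0 : G2 ∉ H0 := fun h => hg2H ((hmemH0 _).1 h).1
  have hePnot : eP ∉ insert G1 (insert G2 H0) := by
    simp only [Finset.mem_insert]
    push_neg
    exact ⟨hePG1, hePG2, hePH0⟩
  have hG1not : G1 ∉ insert G2 H0 := by
    simp only [Finset.mem_insert]
    push_neg
    exact ⟨hG1G2, hG1H0⟩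
  have hmemsw : ∀ X, X ∈ swHf H ei f1 f2 u1 u2 v1 v2 ↔
      X = eP ∨ X = G1 ∨ X = G2 ∨ (X ∈ H ∧ X ≠ ei ∧ X ≠ f1 ∧ X ≠ f2) := by
    intro X
    simp only [swHf, Finset.mem_insert, ← heP, ← hG1, ← hG2, ← hH0, hmemH0]
  have heicard : ei.card = r := hU ei heiH
  have hf1card : f1.card = r := hU f1 hf1H
  have hf2card : f2.card = r := hU f2 hf2H
  have hePcard : eP.card = r := ePf_card heicard hu1 hu2 hu12 hv1ei hv2ei hv12
  have hG1card : G1.card = r := gPf_card hf1card hv1f1 hu1f1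
  have hG2card : G2.card = r := gPf_card hf2card hv2f2 hu2f2
  refine ⟨?_, ?_, ?_, ?_⟩
  · -- uniformity
    intro X hX
    rcases (hmemsw X).1 hX with h | h | h | h
    · exact h ▸ hePcard
    · exact h ▸ hG1card
    · exact h ▸ hG2card
    · exact hU X h.1
  · -- degrees
    intro w
    have hdsw : hDeg n (swHf H ei f1 f2 u1 u2 v1 v2) w =
        (if w ∈ eP then 1 else 0) + ((if w ∈ G1 then 1 else 0) + ((if w ∈ G2 then 1 else 0)
          + ∑ f ∈ H0, if w ∈ f then 1 else 0)) := by
      rw [hDeg, Finset.card_filter, swHf, ← heP, ← hG1, ← hG2, ← hH0,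
        Finset.sum_insert hePnot, Finset.sum_insert hG1not, Finset.sum_insert hG2H0]
    have hf2mem : f2 ∈ (H.erase ei).erase f1 :=
      Finset.mem_erase.2 ⟨hf12.symm, Finset.mem_erase.2 ⟨hf2ei, hf2H⟩⟩
    have hf1mem : f1 ∈ H.erase ei := Finset.mem_erase.2 ⟨hf1ei, hf1H⟩
    have hdH : hDeg n H w = (∑ f ∈ H0, if w ∈ f then 1 else 0) +
        ((if w ∈ f2 then 1 else 0) + ((if w ∈ f1 then 1 else 0) + (if w ∈ ei then 1 else 0))) := by
      rw [hDeg, Finset.card_filter]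
      rw [← Finset.sum_erase_add H _ heiH]
      rw [← Finset.sum_erase_add (H.erase ei) _ hf1mem]
      rw [← Finset.sum_erase_add ((H.erase ei).erase f1) _ hf2mem]
      rw [← hH0]
      ring
    have hchi := chi_key hU heiH hf1H hf2H hu1 hu2 hu12 hv1f1 hv2f2
      ⟨hf1ei, hf2ei, hf12, hu1f1, hu2f2, hu1f2, hu2f1, hv1ei, hv2ei, hv12,
        hv1f2, hv2f1, hePH, hg1H, hg2H⟩ w
    rw [← heP, ← hG1, ← hG2] at hchi
    omega
  · -- ei not in switched
    rw [hmemsw]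
    push_neg
    refine ⟨fun h => hePH (h ▸ heiH), fun h => hg1H (h ▸ heiH),
      fun h => hg2H (h ▸ heiH), fun _ h => absurd rfl h⟩
  · -- recovery
    rw [swHf, ← heP, ← hG1, ← hG2, ← hH0]
    rw [Finset.erase_insert hePnot, Finset.erase_insert hG1not, Finset.erase_insert hG2H0]

end Switch
section Main

open scoped Classical

variable {ei : Finset (Fin n)}

abbrev Tup (n : ℕ) := (Fin n × Fin n) × ((Finset (Fin n) × Fin n) × (Finset (Fin n) × Fin n))
abbrev Cfg (n : ℕ) :=
  (Fin n × Fin n) × ((Fin n × Fin n) × (Finset (Fin n) × (Finset (Fin n) × Finset (Fin n))))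

noncomputable def Dei (ei : Finset (Fin n)) : Finset (Fin n × Fin n) :=
  (ei ×ˢ ei).filter fun p => p.1 ≠ p.2

noncomputable def Sfor (H : Finset (Finset (Fin n))) (ei : Finset (Fin n)) : Finset (Tup n) :=
  ((Dei ei) ×ˢ (Pr H ×ˢ Pr H)).filter fun t =>
    valid H ei t.1.1 t.1.2 t.2.1.2 t.2.2.2 t.2.1.1 t.2.2.1

noncomputable def Rback (H' : Finset (Finset (Fin n))) (ei : Finset (Fin n)) : Finset (Cfg n) :=
  Finset.univ.filter fun c =>
    c.1.1 ∈ ei ∧ c.1.2 ∈ ei ∧ c.1.1 ≠ c.1.2 ∧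
    c.2.1.1 ∉ ei ∧ c.2.1.2 ∉ ei ∧ c.2.1.1 ≠ c.2.1.2 ∧
    c.2.2.1 ∈ H' ∧ c.2.2.1 = ePf ei c.1.1 c.1.2 c.2.1.1 c.2.1.2 ∧
    c.2.2.2.1 ∈ H' ∧ c.1.1 ∈ c.2.2.2.1 ∧ c.2.2.2.2 ∈ H' ∧ c.1.2 ∈ c.2.2.2.2

noncomputable def Aset (n r : ℕ) (k : Fin n → ℕ) (ei : Finset (Fin n)) :
    Finset (Finset (Finset (Fin n))) :=
  Finset.univ.filter fun H => (isUniform n r H ∧ ∀ v, hDeg n H v = k v) ∧ ei ∈ H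

noncomputable def Bset (n r : ℕ) (k : Fin n → ℕ) (ei : Finset (Fin n)) :
    Finset (Finset (Finset (Fin n))) :=
  Finset.univ.filter fun H => (isUniform n r H ∧ ∀ v, hDeg n H v = k v) ∧ ei ∉ H

noncomputable def psi (ei : Finset (Fin n)) :
    (Σ _H : Finset (Finset (Fin n)), Tup n) → (Σ _H : Finset (Finset (Fin n)), Cfg n) :=
  fun x =>
    ⟨swHf x.1 ei x.2.2.1.1 x.2.2.2.1 x.2.1.1 x.2.1.2 x.2.2.1.2 x.2.2.2.2,
      ((x.2.1.1, x.2.1.2), ((x.2.2.1.2, x.2.2.2.2),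
        (ePf ei x.2.1.1 x.2.1.2 x.2.2.1.2 x.2.2.2.2,
          (gPf x.2.2.1.1 x.2.1.1 x.2.2.1.2, gPf x.2.2.2.1 x.2.1.2 x.2.2.2.2))))⟩

lemma gPf_recover {f1 : Finset (Fin n)} {u1 v1 : Fin n} (hu : u1 ∉ f1) (hv : v1 ∈ f1) :
    insert v1 ((gPf f1 u1 v1).erase u1) = f1 := by
  rw [gPf, Finset.erase_insert (fun h => hu (Finset.mem_of_mem_erase h)),
    Finset.insert_erase hv]

lemma H_recover {H : Finset (Finset (Fin n))} {ei f1 f2 : Finset (Fin n)}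
    (heiH : ei ∈ H) (hf1H : f1 ∈ H) (hf2H : f2 ∈ H)
    (hf1ei : f1 ≠ ei) (hf2ei : f2 ≠ ei) (hf12 : f1 ≠ f2) :
    insert ei (insert f1 (insert f2 (((H.erase ei).erase f1).erase f2))) = H := by
  rw [Finset.insert_erase (Finset.mem_erase.2 ⟨hf12.symm, Finset.mem_erase.2 ⟨hf2ei, hf2H⟩⟩),
    Finset.insert_erase (Finset.mem_erase.2 ⟨hf1ei, hf1H⟩), Finset.insert_erase heiH]

lemma mem_Sfor {H : Finset (Finset (Fin n))} {t : Tup n} :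
    t ∈ Sfor H ei ↔ (t.1.1 ∈ ei ∧ t.1.2 ∈ ei ∧ t.1.1 ≠ t.1.2) ∧
      (t.2.1.1 ∈ H ∧ t.2.1.2 ∈ t.2.1.1) ∧ (t.2.2.1 ∈ H ∧ t.2.2.2 ∈ t.2.2.1) ∧
      valid H ei t.1.1 t.1.2 t.2.1.2 t.2.2.2 t.2.1.1 t.2.2.1 := by
  simp only [Sfor, Finset.mem_filter, Finset.mem_product, mem_Pr, Dei]
  tauto

lemma psi_inj (r : ℕ) (k : Fin n → ℕ) (hr : 3 ≤ r) :
    ((Aset n r k ei).sigma fun H => Sfor H ei).card ≤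
      ((Bset n r k ei).sigma fun H => Rback H ei).card := by
  apply Finset.card_le_card_of_injOn (psi ei)
  · -- maps to
    rintro ⟨H, ⟨⟨u1, u2⟩, ⟨⟨f1, v1⟩, ⟨f2, v2⟩⟩⟩⟩ hx
    rw [Finset.mem_coe, Finset.mem_sigma] at hx
    obtain ⟨hHA, hts⟩ := hx
    rw [mem_Sfor] at hts
    dsimp only at hts
    obtain ⟨⟨hu1, hu2, hu12⟩, ⟨hf1H, hv1f1⟩, ⟨hf2H, hv2f2⟩, hval⟩ := hts
    simp only [Aset, Finset.mem_filter] at hHA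
    obtain ⟨-, ⟨hU, hdeg⟩, heiH⟩ := hHA
    obtain ⟨hUsw, hdegsw, heinot, -⟩ :=
      switch_main hr hU heiH hf1H hf2H hu1 hu2 hu12 hv1f1 hv2f2 hval
    rw [Finset.mem_coe, Finset.mem_sigma]
    constructor
    · simp only [Bset, Finset.mem_filter]
      exact ⟨Finset.mem_univ _, ⟨hUsw, fun w => (hdegsw w).trans (hdeg w)⟩, heinot⟩
    · obtain ⟨hf1ei, hf2ei, hf12, hu1f1, hu2f2, hu1f2, hu2f1, hv1ei, hv2ei, hv12,
        hv1f2, hv2f1, hePH, hg1H, hg2H⟩ := hval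
      refine Finset.mem_filter.2 ⟨Finset.mem_univ _, ?_⟩
      refine ⟨hu1, hu2, hu12, hv1ei, hv2ei, hv12, Finset.mem_insert_self _ _, rfl, ?_,
        Finset.mem_insert_self _ _, ?_, Finset.mem_insert_self _ _⟩
      · exact Finset.mem_insert_of_mem (Finset.mem_insert_self _ _)
      · exact Finset.mem_insert_of_mem (Finset.mem_insert_of_mem (Finset.mem_insert_self _ _))
  · -- injective
    rintro ⟨H, ⟨⟨u1, u2⟩, ⟨⟨f1, v1⟩, ⟨f2, v2⟩⟩⟩⟩ hx ⟨H', ⟨⟨u1', u2'⟩, ⟨⟨f1', v1'⟩, ⟨f2', v2'⟩⟩⟩⟩ hy heq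
    simp only [Finset.mem_coe, Finset.mem_sigma] at hx hy
    obtain ⟨hHA, hts⟩ := hx
    obtain ⟨hHA', hts'⟩ := hy
    rw [mem_Sfor] at hts hts'
    dsimp only at hts hts'
    obtain ⟨⟨hu1, hu2, hu12⟩, ⟨hf1H, hv1f1⟩, ⟨hf2H, hv2f2⟩, hval⟩ := hts
    obtain ⟨⟨hu1', hu2', hu12'⟩, ⟨hf1H', hv1f1'⟩, ⟨hf2H', hv2f2'⟩, hval'⟩ := hts'
    simp only [Aset, Finset.mem_filter] at hHA hHA'
    obtain ⟨-, ⟨hU, hdeg⟩, heiH⟩ := hHA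
    obtain ⟨-, ⟨hU', hdeg'⟩, heiH'⟩ := hHA'
    simp only [psi, Sigma.mk.inj_iff, Prod.mk.injEq, heq_eq_eq] at heq
    obtain ⟨hsw, ⟨hequ1, hequ2⟩, ⟨heqv1, heqv2⟩, heqeP, heqg1, heqg2⟩ := heq
    subst hequ1; subst hequ2; subst heqv1; subst heqv2
    have hf1eq : f1 = f1' := by
      rw [← gPf_recover hval.2.2.2.1 hv1f1, ← gPf_recover hval'.2.2.2.1 hv1f1', heqg1]
    have hf2eq : f2 = f2' := by
      rw [← gPf_recover hval.2.2.2.2.1 hv2f2, ← gPf_recover hval'.2.2.2.2.1 hv2f2', heqg2]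
    subst hf1eq; subst hf2eq
    have hrec := (switch_main hr hU heiH hf1H hf2H hu1 hu2 hu12 hv1f1 hv2f2 hval).2.2.2
    have hrec' := (switch_main hr hU' heiH' hf1H' hf2H' hu1' hu2' hu12' hv1f1' hv2f2' hval').2.2.2
    have hH0 : ((H.erase ei).erase f1).erase f2 = ((H'.erase ei).erase f1).erase f2 := by
      rw [← hrec, ← hrec', hsw]
    have : H = H' := by
      rw [← H_recover heiH hf1H hf2H hval.1 hval.2.1 hval.2.2.1,
        ← H_recover heiH' hf1H' hf2H' hval'.1 hval'.2.1 hval'.2.2.1, hH0]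
    subst this
    rfl

noncomputable def xch (ei : Finset (Fin n)) (p : Fin n × Fin n) : Fin n :=
  if h : (ei \ {p.1, p.2}).Nonempty then (ei \ {p.1, p.2}).min' h else p.1

lemma xch_mem {ei : Finset (Fin n)} {p : Fin n × Fin n} (h : (ei \ {p.1, p.2}).Nonempty) :
    xch ei p ∈ ei \ {p.1, p.2} := by
  rw [xch, dif_pos h]
  exact Finset.min'_mem _ h

lemma sdiff_pair_nonempty {ei : Finset (Fin n)} {u1 u2 : Fin n} (hr : 3 ≤ r)
    (heicard : ei.card = r) : (ei \ {u1, u2}).Nonempty := by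
  rw [Finset.sdiff_nonempty]
  intro hsub
  have h1 := Finset.card_le_card hsub
  have h2 : ({u1, u2} : Finset (Fin n)).card ≤ 2 := Finset.card_insert_le _ _ |>.trans (by simp)
  omega

lemma Rback_card {K : ℕ} {k : Fin n → ℕ} (hr : 3 ≤ r) (heicard : ei.card = r)
    {H' : Finset (Finset (Fin n))} (hd' : ∀ v, hDeg n H' v = k v) (hK : ∀ v, k v ≤ K) :
    (Rback H' ei).card ≤ 2 * r ^ 2 * K ^ 3 := by
  have hmain : (Rback H' ei).card ≤
      ((ei ×ˢ ei).sigma fun p => (H'.filter fun g => xch ei p ∈ g) ×ˢ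
        ((H'.filter fun g => p.1 ∈ g) ×ˢ ((H'.filter fun g => p.2 ∈ g) ×ˢ
          (Finset.univ : Finset Bool)))).card := by
    apply Finset.card_le_card_of_injOn
      (fun c => ⟨c.1, (c.2.2.1, (c.2.2.2.1, (c.2.2.2.2, decide (c.2.1.1 < c.2.1.2))))⟩)
    · rintro ⟨⟨u1, u2⟩, ⟨⟨v1, v2⟩, ⟨eP, ⟨g1, g2⟩⟩⟩⟩ hc
      simp only [Finset.mem_coe, Rback, Finset.mem_filter, Finset.mem_univ, true_and] at hc
      obtain ⟨hu1, hu2, hu12, hv1, hv2, hv12, hePH, hePeq, hg1H, hu1g1, hg2H, hu2g2⟩ := hc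
      rw [Finset.mem_coe, Finset.mem_sigma]
      refine ⟨Finset.mem_product.2 ⟨hu1, hu2⟩, ?_⟩
      have hne : ((ei : Finset (Fin n)) \ {u1, u2}).Nonempty := sdiff_pair_nonempty hr heicard
      have hx := xch_mem (p := (u1, u2)) hne
      refine Finset.mem_product.2 ⟨Finset.mem_filter.2 ⟨hePH, ?_⟩,
        Finset.mem_product.2 ⟨Finset.mem_filter.2 ⟨hg1H, hu1g1⟩,
          Finset.mem_product.2 ⟨Finset.mem_filter.2 ⟨hg2H, hu2g2⟩, Finset.mem_univ _⟩⟩⟩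
      rw [hePeq, ePf]
      exact Finset.mem_union_left _ hx
    · rintro ⟨⟨u1, u2⟩, ⟨⟨v1, v2⟩, ⟨eP, ⟨g1, g2⟩⟩⟩⟩ hc ⟨⟨u1', u2'⟩, ⟨⟨v1', v2'⟩, ⟨eP', ⟨g1', g2'⟩⟩⟩⟩ hc' heq
      simp only [Finset.mem_coe, Rback, Finset.mem_filter, Finset.mem_univ, true_and] at hc hc'
      obtain ⟨hu1, hu2, hu12, hv1, hv2, hv12, hePH, hePeq, hg1H, hu1g1, hg2H, hu2g2⟩ := hc
      obtain ⟨hu1', hu2', hu12', hv1', hv2', hv12', hePH', hePeq', hg1H', hu1g1', hg2H', hu2g2'⟩ := hc'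
      simp only [Sigma.mk.inj_iff, Prod.mk.injEq, heq_eq_eq] at heq
      obtain ⟨⟨hequ1, hequ2⟩, heqeP, heqg1, heqg2, heqb⟩ := heq
      subst hequ1; subst hequ2; subst heqeP; subst heqg1; subst heqg2
      have hchar : ∀ w : Fin n, (w = v1 ∨ w = v2) ↔ (w ∈ eP ∧ w ∉ ei) := by
        intro w
        rw [hePeq, mem_ePf]
        constructor
        · rintro (rfl | rfl)
          · exact ⟨Or.inr (Or.inl rfl), hv1⟩
          · exact ⟨Or.inr (Or.inr rfl), hv2⟩
        · rintro ⟨(⟨hw, -⟩ | hw | hw), hnw⟩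
          · exact absurd hw hnw
          · exact Or.inl hw
          · exact Or.inr hw
      have hchar' : ∀ w : Fin n, (w = v1' ∨ w = v2') ↔ (w ∈ eP ∧ w ∉ ei) := by
        intro w
        rw [hePeq', mem_ePf]
        constructor
        · rintro (rfl | rfl)
          · exact ⟨Or.inr (Or.inl rfl), hv1'⟩
          · exact ⟨Or.inr (Or.inr rfl), hv2'⟩
        · rintro ⟨(⟨hw, -⟩ | hw | hw), hnw⟩
          · exact absurd hw hnw
          · exact Or.inl hw
          · exact Or.inr hw
      have hv1m : v1 = v1' ∨ v1 = v2' := (hchar' v1).2 ((hchar v1).1 (Or.inl rfl))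
      have hv2m : v2 = v1' ∨ v2 = v2' := (hchar' v2).2 ((hchar v2).1 (Or.inr rfl))
      have hveq : v1 = v1' ∧ v2 = v2' := by
        rcases hv1m with h11 | h12
        · refine ⟨h11, ?_⟩
          rcases hv2m with h21 | h22
          · exact absurd (h21.trans h11.symm).symm hv12
          · exact h22
        · -- v1 = v2' ; derive contradiction using the order bit
          have hv1'm : v1' = v1 ∨ v1' = v2 := (hchar v1').2 ((hchar' v1').1 (Or.inl rfl))
          rcases hv1'm with h31 | h32
          · refine ⟨h31.symm, ?_⟩
            rcases hv2m with h21 | h22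
            · exact absurd (h21.trans h31) hv12.symm
            · exact h22
          · exfalso
            have hb : (v1 < v2) ↔ (v1' < v2') := by
              constructor
              · intro h
                have := heqb
                simp only [decide_eq_decide] at this
                exact this.1 h
              · intro h
                have := heqb
                simp only [decide_eq_decide] at this
                exact this.2 h
            rw [h32, ← h12] at hb
            rcases lt_trichotomy v1 v2 with hlt | heq2 | hgt
            · exact absurd (hb.1 hlt) (lt_asymm hlt)
            · exact hv12 heq2
            · exact absurd (hb.2 hgt) (lt_asymm hgt)
      obtain ⟨e1, e2⟩ := hveq
      subst e1; subst e2
      rfl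
  refine hmain.trans ?_
  rw [Finset.card_sigma]
  have hbound : ∀ p ∈ ei ×ˢ ei,
      ((H'.filter fun g => xch ei p ∈ g) ×ˢ ((H'.filter fun g => p.1 ∈ g) ×ˢ
        ((H'.filter fun g => p.2 ∈ g) ×ˢ (Finset.univ : Finset Bool)))).card
        ≤ K * (K * (K * 2)) := by
    intro p _
    rw [Finset.card_product, Finset.card_product, Finset.card_product]
    have hcb : (Finset.univ : Finset Bool).card = 2 := by simp
    rw [hcb]
    have h1 : (H'.filter fun g => xch ei p ∈ g).card ≤ K := by
      rw [← hDeg]; rw [hd']; exact hK _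
    have h2 : (H'.filter fun g => p.1 ∈ g).card ≤ K := by
      rw [← hDeg]; rw [hd']; exact hK _
    have h3 : (H'.filter fun g => p.2 ∈ g).card ≤ K := by
      rw [← hDeg]; rw [hd']; exact hK _
    exact Nat.mul_le_mul h1 (Nat.mul_le_mul h2 (Nat.mul_le_mul_right 2 h3))
  calc (∑ p ∈ ei ×ˢ ei, ((H'.filter fun g => xch ei p ∈ g) ×ˢ ((H'.filter fun g => p.1 ∈ g) ×ˢ
        ((H'.filter fun g => p.2 ∈ g) ×ˢ (Finset.univ : Finset Bool)))).card)
      ≤ (ei ×ˢ ei).card * (K * (K * (K * 2))) := by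
        rw [← smul_eq_mul]
        exact Finset.sum_le_card_nsmul _ _ _ hbound
    _ = 2 * r ^ 2 * K ^ 3 := by
        rw [Finset.card_product, heicard]
        ring

lemma Dei_card (heicard : ei.card = r) : (Dei ei).card = r * r - r := by
  have hsplit := Finset.card_filter_add_card_filter_not
    (s := ei ×ˢ ei) (p := fun p => p.1 ≠ p.2)
  have hdiag : ((ei ×ˢ ei).filter fun p => ¬p.1 ≠ p.2).card = r := by
    have : ((ei ×ˢ ei).filter fun p => ¬p.1 ≠ p.2) = ei.image fun x => (x, x) := by
      ext ⟨a, b⟩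
      simp only [Finset.mem_filter, Finset.mem_product, Finset.mem_image, not_not,
        Prod.mk.injEq]
      constructor
      · rintro ⟨⟨ha, -⟩, rfl⟩
        exact ⟨a, ha, rfl, rfl⟩
      · rintro ⟨x, hx, rfl, rfl⟩
        exact ⟨⟨hx, hx⟩, rfl⟩
    rw [this, Finset.card_image_of_injective _ (fun a b h => (Prod.ext_iff.1 h).1),
      heicard]
  have hprod : (ei ×ˢ ei).card = r * r := by rw [Finset.card_product, heicard]
  rw [Dei]
  omega

variable {H : Finset (Finset (Fin n))}

/-- fiber bound projecting away the second pair (f1,v1) -/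
lemma fiber_second {E : Tup n → Prop} [DecidablePred E]
    {c : ((Fin n × Fin n) × (Finset (Fin n) × Fin n)) → (Finset (Fin n) × Fin n) → Prop}
    [∀ b, DecidablePred (c b)] {m : ℕ}
    (hc : ∀ b ∈ (Dei ei) ×ˢ Pr H, ((Pr H).filter (c b)).card ≤ m)
    (himp : ∀ t : Tup n, E t → c (t.1, t.2.2) t.2.1) :
    (((Dei ei) ×ˢ (Pr H ×ˢ Pr H)).filter E).card ≤ m * ((Dei ei).card * (Pr H).card) := by
  have := Finset.card_le_mul_card_image_of_maps_to
    (f := fun t : Tup n => (t.1, t.2.2)) (s := ((Dei ei) ×ˢ (Pr H ×ˢ Pr H)).filter E)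
    (t := (Dei ei) ×ˢ Pr H)
    (fun t ht => by
      rw [Finset.mem_filter, Finset.mem_product, Finset.mem_product] at ht
      exact Finset.mem_product.2 ⟨ht.1.1, ht.1.2.2⟩)
    m
    (fun b hb => by
      apply le_trans (Finset.card_le_card_of_injOn (fun t => t.2.1)
        (t := (Pr H).filter (c b)) ?_ ?_) (hc b hb)
      · intro t ht
        simp only [Finset.mem_coe, Finset.mem_filter, Finset.mem_product] at ht
        obtain ⟨⟨hbase, hE⟩, hproj⟩ := ht
        refine Finset.mem_filter.2 ⟨hbase.2.1, ?_⟩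
        have := himp t hE
        rwa [hproj] at this
      · intro t ht t' ht' h
        simp only [Finset.coe_filter, Set.mem_setOf_eq] at ht ht'
        have h1 : t.1 = t'.1 := by
          have := ht.2.trans ht'.2.symm
          exact (Prod.ext_iff.1 this).1
        have h2 : t.2.2 = t'.2.2 := by
          have := ht.2.trans ht'.2.symm
          exact (Prod.ext_iff.1 this).2
        exact Prod.ext h1 (Prod.ext h h2))
  calc (((Dei ei) ×ˢ (Pr H ×ˢ Pr H)).filter E).card
      ≤ m * ((Dei ei) ×ˢ Pr H).card := this
    _ = m * ((Dei ei).card * (Pr H).card) := by rw [Finset.card_product]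

/-- fiber bound projecting away the third pair (f2,v2) -/
lemma fiber_third {E : Tup n → Prop} [DecidablePred E]
    {c : ((Fin n × Fin n) × (Finset (Fin n) × Fin n)) → (Finset (Fin n) × Fin n) → Prop}
    [∀ b, DecidablePred (c b)] {m : ℕ}
    (hc : ∀ b ∈ (Dei ei) ×ˢ Pr H, ((Pr H).filter (c b)).card ≤ m)
    (himp : ∀ t : Tup n, E t → c (t.1, t.2.1) t.2.2) :
    (((Dei ei) ×ˢ (Pr H ×ˢ Pr H)).filter E).card ≤ m * ((Dei ei).card * (Pr H).card) := by
  have := Finset.card_le_mul_card_image_of_maps_to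
    (f := fun t : Tup n => (t.1, t.2.1)) (s := ((Dei ei) ×ˢ (Pr H ×ˢ Pr H)).filter E)
    (t := (Dei ei) ×ˢ Pr H)
    (fun t ht => by
      rw [Finset.mem_filter, Finset.mem_product, Finset.mem_product] at ht
      exact Finset.mem_product.2 ⟨ht.1.1, ht.1.2.1⟩)
    m
    (fun b hb => by
      apply le_trans (Finset.card_le_card_of_injOn (fun t => t.2.2)
        (t := (Pr H).filter (c b)) ?_ ?_) (hc b hb)
      · intro t ht
        simp only [Finset.mem_coe, Finset.mem_filter, Finset.mem_product] at ht
        obtain ⟨⟨hbase, hE⟩, hproj⟩ := ht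
        refine Finset.mem_filter.2 ⟨hbase.2.2, ?_⟩
        have := himp t hE
        rwa [hproj] at this
      · intro t ht t' ht' h
        simp only [Finset.coe_filter, Set.mem_setOf_eq] at ht ht'
        have h1 : t.1 = t'.1 := by
          have := ht.2.trans ht'.2.symm
          exact (Prod.ext_iff.1 this).1
        have h2 : t.2.1 = t'.2.1 := by
          have := ht.2.trans ht'.2.symm
          exact (Prod.ext_iff.1 this).2
        exact Prod.ext h1 (Prod.ext h2 h))
  calc (((Dei ei) ×ˢ (Pr H ×ˢ Pr H)).filter E).card
      ≤ m * ((Dei ei) ×ˢ Pr H).card := this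
    _ = m * ((Dei ei).card * (Pr H).card) := by rw [Finset.card_product]

lemma E15_bound {K : ℕ} {k : Fin n → ℕ} (hr : 3 ≤ r) (heicard : ei.card = r)
    (hU : isUniform n r H) (hd : ∀ v, hDeg n H v = k v) (hK : ∀ v, k v ≤ K) :
    (((Dei ei) ×ˢ (Pr H ×ˢ Pr H)).filter fun t =>
        ePf ei t.1.1 t.1.2 t.2.1.2 t.2.2.2 ∈ H).card ≤
      (Dei ei).card * (K * ((r * r) * (K * K))) := by
  set tgt := (Dei ei).sigma (fun p => (H.filter fun g => xch ei p ∈ g).sigma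
    (fun g => (g ×ˢ g).sigma (fun vv =>
      (H.filter fun f => vv.1 ∈ f) ×ˢ (H.filter fun f => vv.2 ∈ f)))) with htgt
  have hstep1 : (((Dei ei) ×ˢ (Pr H ×ˢ Pr H)).filter fun t =>
      ePf ei t.1.1 t.1.2 t.2.1.2 t.2.2.2 ∈ H).card ≤ tgt.card := by
    apply Finset.card_le_card_of_injOn (fun t =>
      ⟨t.1, ⟨ePf ei t.1.1 t.1.2 t.2.1.2 t.2.2.2, ⟨(t.2.1.2, t.2.2.2), (t.2.1.1, t.2.2.1)⟩⟩⟩)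
    · intro t ht
      simp only [Finset.mem_coe, Finset.mem_filter, Finset.mem_product] at ht
      obtain ⟨⟨hD, hq1, hq2⟩, hE⟩ := ht
      rw [mem_Pr] at hq1 hq2
      have hDm := hD
      simp only [Dei, Finset.mem_filter, Finset.mem_product] at hDm
      obtain ⟨⟨hu1, hu2⟩, hu12⟩ := hDm
      have hne : (ei \ {t.1.1, t.1.2}).Nonempty := sdiff_pair_nonempty hr heicard
      have hx := xch_mem (p := t.1) hne
      rw [Finset.mem_sdiff, Finset.mem_insert, Finset.mem_singleton] at hx
      push_neg at hx
      rw [htgt, Finset.mem_coe, Finset.mem_sigma]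
      refine ⟨hD, ?_⟩
      rw [Finset.mem_sigma]
      refine ⟨Finset.mem_filter.2 ⟨hE, ?_⟩, ?_⟩
      · rw [mem_ePf]
        exact Or.inl ⟨hx.1, hx.2.1, hx.2.2⟩
      · rw [Finset.mem_sigma]
        refine ⟨Finset.mem_product.2 ⟨?_, ?_⟩, ?_⟩
        · rw [mem_ePf]; exact Or.inr (Or.inl rfl)
        · rw [mem_ePf]; exact Or.inr (Or.inr rfl)
        · exact Finset.mem_product.2 ⟨Finset.mem_filter.2 ⟨hq1.1, hq1.2⟩,
            Finset.mem_filter.2 ⟨hq2.1, hq2.2⟩⟩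
    · intro t ht t' ht' h
      simp only [Sigma.mk.inj_iff, heq_eq_eq, Prod.mk.injEq] at h
      obtain ⟨h1, -, ⟨hv1, hv2⟩, ⟨hf1, hf2⟩⟩ := h
      exact Prod.ext h1 (Prod.ext (Prod.ext hf1 hv1) (Prod.ext hf2 hv2))
  refine hstep1.trans ?_
  rw [htgt, Finset.card_sigma]
  rw [← smul_eq_mul]
  apply Finset.sum_le_card_nsmul
  intro p hp
  rw [Finset.card_sigma, ← smul_eq_mul]
  have houter : (H.filter fun g => xch ei p ∈ g).card ≤ K := by
    rw [← hDeg, hd]; exact hK _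
  calc ∑ g ∈ H.filter (fun g => xch ei p ∈ g),
        ((g ×ˢ g).sigma fun vv =>
          (H.filter fun f => vv.1 ∈ f) ×ˢ (H.filter fun f => vv.2 ∈ f)).card
      ≤ (H.filter fun g => xch ei p ∈ g).card • ((r * r) * (K * K)) := by
        apply Finset.sum_le_card_nsmul
        intro g hg
        rw [Finset.mem_filter] at hg
        have hgcard : g.card = r := hU g hg.1
        rw [Finset.card_sigma, ← smul_eq_mul]
        have hvv : ∀ vv ∈ g ×ˢ g,
            ((H.filter fun f => vv.1 ∈ f) ×ˢ (H.filter fun f => vv.2 ∈ f)).card ≤ K * K := by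
          intro vv _
          rw [Finset.card_product]
          have h1 : (H.filter fun f => vv.1 ∈ f).card ≤ K := by rw [← hDeg, hd]; exact hK _
          have h2 : (H.filter fun f => vv.2 ∈ f).card ≤ K := by rw [← hDeg, hd]; exact hK _
          exact Nat.mul_le_mul h1 h2
        calc ∑ vv ∈ g ×ˢ g, ((H.filter fun f => vv.1 ∈ f) ×ˢ (H.filter fun f => vv.2 ∈ f)).card
            ≤ (g ×ˢ g).card • (K * K) := Finset.sum_le_card_nsmul _ _ _ hvv
          _ = (r * r) * (K * K) := by rw [Finset.card_product, hgcard, smul_eq_mul]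
    _ = (H.filter fun g => xch ei p ∈ g).card * ((r * r) * (K * K)) := by rw [smul_eq_mul]
    _ ≤ K • ((r * r) * (K * K)) := by
        rw [smul_eq_mul]
        exact Nat.mul_le_mul_right _ houter
    _ = K * ((r * r) * (K * K)) := by rw [smul_eq_mul]

set_option maxHeartbeats 2000000 in
lemma Sfor_card_lb {K : ℕ} {k : Fin n → ℕ} (hr : 3 ≤ r) (heicard : ei.card = r)
    (hU : isUniform n r H) (hd : ∀ v, hDeg n H v = k v) (hK : ∀ v, k v ≤ K)
    (hKpos : 1 ≤ K) (hM : 100 * (r ^ 4 * K ^ 3) ≤ Mk n k) :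
    (r * r - r) * (Mk n k * Mk n k) ≤ 2 * (Sfor H ei).card := by
  have hdK : ∀ v, hDeg n H v ≤ K := fun v => (hd v) ▸ hK v
  set M := Mk n k with hMdef
  set base := (Dei ei) ×ˢ (Pr H ×ˢ Pr H) with hbase
  have hPr : (Pr H).card = M := card_Pr hU hd
  have hD : (Dei ei).card = r * r - r := Dei_card heicard
  have hbasecard : base.card = (r * r - r) * (M * M) := by
    rw [hbase, Finset.card_product, Finset.card_product, hPr, hD]
  have hsplit : (Sfor H ei).card +
      (base.filter fun t => ¬ valid H ei t.1.1 t.1.2 t.2.1.2 t.2.2.2 t.2.1.1 t.2.2.1).card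
      = base.card := by
    rw [Sfor, ← hbase]
    exact Finset.card_filter_add_card_filter_not _
  set bad := base.filter fun t => ¬ valid H ei t.1.1 t.1.2 t.2.1.2 t.2.2.2 t.2.1.1 t.2.2.1
    with hbaddef
  have hsub : bad ⊆ (base.filter fun t : Tup n => t.2.1.1 = ei) ∪ ((base.filter fun t : Tup n => t.2.2.1 = ei) ∪ ((base.filter fun t : Tup n => t.2.1.1 = t.2.2.1) ∪ ((base.filter fun t : Tup n => t.1.1 ∈ t.2.1.1) ∪ ((base.filter fun t : Tup n => t.1.2 ∈ t.2.2.1) ∪ ((base.filter fun t : Tup n => t.1.1 ∈ t.2.2.1) ∪ ((base.filter fun t : Tup n => t.1.2 ∈ t.2.1.1) ∪ ((base.filter fun t : Tup n => t.2.1.2 ∈ ei) ∪ ((base.filter fun t : Tup n => t.2.2.2 ∈ ei) ∪ ((base.filter fun t : Tup n => t.2.1.2 = t.2.2.2) ∪ ((base.filter fun t : Tup n => t.2.1.2 ∈ t.2.2.1) ∪ ((base.filter fun t : Tup n => t.2.2.2 ∈ t.2.1.1) ∪ ((base.filter fun t : Tup n => t.1.1 ∉ t.2.1.1 ∧ insert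 t.1.1 (t.2.1.1.erase t.2.1.2) ∈ H) ∪ ((base.filter fun t : Tup n => t.1.2 ∉ t.2.2.1 ∧ insert t.1.2 (t.2.2.1.erase t.2.2.2) ∈ H) ∪ ((base.filter fun t : Tup n => ePf ei t.1.1 t.1.2 t.2.1.2 t.2.2.2 ∈ H))))))))))))))) := by
    intro t ht
    rw [hbaddef, Finset.mem_filter] at ht
    obtain ⟨hb, hnv⟩ := ht
    rw [valid] at hnv
    simp only [Finset.mem_union, Finset.mem_filter]
    tauto
  have hbadle : bad.card ≤ (base.filter fun t : Tup n => t.2.1.1 = ei).card + ((base.filter fun t : Tup n => t.2.2.1 = ei).card + ((base.filter fun t : Tup n => t.2.1.1 = t.2.2.1).card + ((base.filter fun t : Tup n => t.1.1 ∈ t.2.1.1).card + ((base.filter fun t : Tup n => t.1.2 ∈ t.2.2.1).card + ((base.filter fun t : Tup n => t.1.1 ∈ t.2.2.1).card + ((base.filter fun t : Tup n => t.1.2 ∈ t.2.1.1).card + ((base.filter fun t : Tup n => t.2.1.2 ∈ ei).card + ((base.filter fun t : Tup n => t.2.2.2 ∈ ei).card + ((base.filter fun t : Tup n => t.2.1.2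 = t.2.2.2).card + ((base.filter fun t : Tup n => t.2.1.2 ∈ t.2.2.1).card + ((base.filter fun t : Tup n => t.2.2.2 ∈ t.2.1.1).card + ((base.filter fun t : Tup n => t.1.1 ∉ t.2.1.1 ∧ insert t.1.1 (t.2.1.1.erase t.2.1.2) ∈ H).card + ((base.filter fun t : Tup n => t.1.2 ∉ t.2.2.1 ∧ insert t.1.2 (t.2.2.1.erase t.2.2.2) ∈ H).card + ((base.filter fun t : Tup n => ePf ei t.1.1 t.1.2 t.2.1.2 t.2.2.2 ∈ H).card)))))))))))))) := by
    refine le_trans (Finset.card_le_card hsub) ?_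
    iterate 14
      refine le_trans (Finset.card_union_le _ _) (Nat.add_le_add_left ?_ _)
    exact le_rfl
  have hB1 : (base.filter fun t : Tup n => t.2.1.1 = ei).card ≤ r * ((r * r - r) * M) := by
    rw [hbase, ← hD, ← hPr]
    exact fiber_second (c := fun _ q => q.1 = ei) (fun b hb => (Pr_fst_eq ei).trans (le_of_eq heicard)) (fun t h => h)
  have hB2 : (base.filter fun t : Tup n => t.2.2.1 = ei).card ≤ r * ((r * r - r) * M) := by
    rw [hbase, ← hD, ← hPr]
    exact fiber_third (c := fun _ q => q.1 = ei) (fun b hb => (Pr_fst_eq ei).trans (le_of_eq heicard)) (fun t h => h)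
  have hB3 : (base.filter fun t : Tup n => t.2.1.1 = t.2.2.1).card ≤ r * ((r * r - r) * M) := by
    rw [hbase, ← hD, ← hPr]
    exact fiber_third (c := fun b q => q.1 = b.2.1) (fun b hb => by
        have hbH : b.2.1 ∈ H := (mem_Pr.1 (Finset.mem_product.1 hb).2).1
        exact (Pr_fst_eq b.2.1).trans (le_of_eq (hU _ hbH))) (fun t h => h.symm)
  have hB4 : (base.filter fun t : Tup n => t.1.1 ∈ t.2.1.1).card ≤ r * K * ((r * r - r) * M) := by
    rw [hbase, ← hD, ← hPr]
    exact fiber_second (c := fun b q => b.1.1 ∈ q.1) (fun b hb => (Pr_fst_mem hU b.1.1).trans (Nat.mul_le_mul_left r (hdK b.1.1))) (fun t h => h)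
  have hB5 : (base.filter fun t : Tup n => t.1.2 ∈ t.2.2.1).card ≤ r * K * ((r * r - r) * M) := by
    rw [hbase, ← hD, ← hPr]
    exact fiber_third (c := fun b q => b.1.2 ∈ q.1) (fun b hb => (Pr_fst_mem hU b.1.2).trans (Nat.mul_le_mul_left r (hdK b.1.2))) (fun t h => h)
  have hB6 : (base.filter fun t : Tup n => t.1.1 ∈ t.2.2.1).card ≤ r * K * ((r * r - r) * M) := by
    rw [hbase, ← hD, ← hPr]
    exact fiber_third (c := fun b q => b.1.1 ∈ q.1) (fun b hb => (Pr_fst_mem hU b.1.1).trans (Nat.mul_le_mul_left r (hdK b.1.1))) (fun t h => h)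
  have hB7 : (base.filter fun t : Tup n => t.1.2 ∈ t.2.1.1).card ≤ r * K * ((r * r - r) * M) := by
    rw [hbase, ← hD, ← hPr]
    exact fiber_second (c := fun b q => b.1.2 ∈ q.1) (fun b hb => (Pr_fst_mem hU b.1.2).trans (Nat.mul_le_mul_left r (hdK b.1.2))) (fun t h => h)
  have hB8 : (base.filter fun t : Tup n => t.2.1.2 ∈ ei).card ≤ K * r * ((r * r - r) * M) := by
    rw [hbase, ← hD, ← hPr]
    exact fiber_second (c := fun _ q => q.2 ∈ ei) (fun b hb => (Pr_snd_mem hdK ei).trans (le_of_eq (by rw [heicard]))) (fun t h => h)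
  have hB9 : (base.filter fun t : Tup n => t.2.2.2 ∈ ei).card ≤ K * r * ((r * r - r) * M) := by
    rw [hbase, ← hD, ← hPr]
    exact fiber_third (c := fun _ q => q.2 ∈ ei) (fun b hb => (Pr_snd_mem hdK ei).trans (le_of_eq (by rw [heicard]))) (fun t h => h)
  have hB10 : (base.filter fun t : Tup n => t.2.1.2 = t.2.2.2).card ≤ K * ((r * r - r) * M) := by
    rw [hbase, ← hD, ← hPr]
    exact fiber_third (c := fun b q => q.2 = b.2.2) (fun b hb => (Pr_snd_eq b.2.2).trans (hdK b.2.2)) (fun t h => h.symm)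
  have hB11 : (base.filter fun t : Tup n => t.2.1.2 ∈ t.2.2.1).card ≤ r * K * ((r * r - r) * M) := by
    rw [hbase, ← hD, ← hPr]
    exact fiber_third (c := fun b q => b.2.2 ∈ q.1) (fun b hb => (Pr_fst_mem hU b.2.2).trans (Nat.mul_le_mul_left r (hdK b.2.2))) (fun t h => h)
  have hB12 : (base.filter fun t : Tup n => t.2.2.2 ∈ t.2.1.1).card ≤ r * K * ((r * r - r) * M) := by
    rw [hbase, ← hD, ← hPr]
    exact fiber_second (c := fun b q => b.2.2 ∈ q.1) (fun b hb => (Pr_fst_mem hU b.2.2).trans (Nat.mul_le_mul_left r (hdK b.2.2))) (fun t h => h)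
  have hB13 : (base.filter fun t : Tup n => t.1.1 ∉ t.2.1.1 ∧ insert t.1.1 (t.2.1.1.erase t.2.1.2) ∈ H).card ≤ K * K * ((r * r - r) * M) := by
    rw [hbase, ← hD, ← hPr]
    exact fiber_second (c := fun b q => b.1.1 ∉ q.1 ∧ insert b.1.1 (q.1.erase q.2) ∈ H) (fun b hb => Pr_switch hU (by omega) hdK b.1.1) (fun t h => h)
  have hB14 : (base.filter fun t : Tup n => t.1.2 ∉ t.2.2.1 ∧ insert t.1.2 (t.2.2.1.erase t.2.2.2) ∈ H).card ≤ K * K * ((r * r - r) * M) := by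
    rw [hbase, ← hD, ← hPr]
    exact fiber_third (c := fun b q => b.1.2 ∉ q.1 ∧ insert b.1.2 (q.1.erase q.2) ∈ H) (fun b hb => Pr_switch hU (by omega) hdK b.1.2) (fun t h => h)
  have hB15 : (base.filter fun t : Tup n => ePf ei t.1.1 t.1.2 t.2.1.2 t.2.2.2 ∈ H).card ≤
      (r * r - r) * (K * ((r * r) * (K * K))) := by
    rw [hbase, ← hD]
    exact E15_bound hr heicard hU hd hK
  have harith : 2 * bad.card ≤ (r * r - r) * (M * M) := by
    have hr1 : 0 < r := by omega
    have hK1 : 0 < K := by omega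
    have hX1 : 0 < r ^ 4 * K ^ 3 := Nat.mul_pos (pow_pos hr1 4) (pow_pos hK1 3)
    have hM1 : 1 ≤ M := le_trans (by omega) hM
    have hrle : r ≤ r ^ 4 * K ^ 3 := by
      have e : r ^ 4 * K ^ 3 = r * (r ^ 3 * K ^ 3) := by ring
      rw [e]
      exact Nat.le_mul_of_pos_right r (Nat.mul_pos (pow_pos hr1 3) (pow_pos hK1 3))
    have hrKle : r * K ≤ r ^ 4 * K ^ 3 := by
      have e : r ^ 4 * K ^ 3 = (r * K) * (r ^ 3 * K ^ 2) := by ring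
      rw [e]
      exact Nat.le_mul_of_pos_right _ (Nat.mul_pos (pow_pos hr1 3) (pow_pos hK1 2))
    have hKle : K ≤ r ^ 4 * K ^ 3 := by
      have e : r ^ 4 * K ^ 3 = K * (r ^ 4 * K ^ 2) := by ring
      rw [e]
      exact Nat.le_mul_of_pos_right _ (Nat.mul_pos (pow_pos hr1 4) (pow_pos hK1 2))
    have hKKle : K * K ≤ r ^ 4 * K ^ 3 := by
      have e : r ^ 4 * K ^ 3 = (K * K) * (r ^ 4 * K) := by ring
      rw [e]
      exact Nat.le_mul_of_pos_right _ (Nat.mul_pos (pow_pos hr1 4) hK1)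
    have hTle : K * ((r * r) * (K * K)) ≤ r ^ 4 * K ^ 3 := by
      have e1 : K * ((r * r) * (K * K)) = r ^ 2 * K ^ 3 := by ring
      have e2 : r ^ 4 * K ^ 3 = (r ^ 2 * K ^ 3) * r ^ 2 := by ring
      rw [e1, e2]
      exact Nat.le_mul_of_pos_right _ (pow_pos hr1 2)
    have hsum : bad.card ≤
        (3 * r + 6 * (r * K) + (2 * (K * r) + (K + 2 * (K * K)))) * ((r * r - r) * M)
          + (r * r - r) * (K * ((r * r) * (K * K))) := by
      refine hbadle.trans ?_
      have := hB1; have := hB2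
      calc (base.filter fun t : Tup n => t.2.1.1 = ei).card + ((base.filter fun t : Tup n => t.2.2.1 = ei).card + ((base.filter fun t : Tup n => t.2.1.1 = t.2.2.1).card + ((base.filter fun t : Tup n => t.1.1 ∈ t.2.1.1).card + ((base.filter fun t : Tup n => t.1.2 ∈ t.2.2.1).card + ((base.filter fun t : Tup n => t.1.1 ∈ t.2.2.1).card + ((base.filter fun t : Tup n => t.1.2 ∈ t.2.1.1).card + ((base.filter fun t : Tup n => t.2.1.2 ∈ ei).card + ((base.filter fun t : Tup n => t.2.2.2 ∈ ei).card + ((base.filter fun t : Tup n => t.2.1.2 = t.2.2.2).card + ((base.filter fun t : Tup n => t.2.1.2 ∈ t.2.2.1).card + ((base.filter fun t : Tup n => t.2.2.2 ∈ t.2.1.1).card + ((base.filter fun t : Tup n => t.1.1 ∉ t.2.1.1 ∧ insert t.1.1 (t.2.1.1.erase t.2.1.2) ∈ H).card + ((base.filter fun t : Tup n => t.1.2 ∉ t.2.2.1 ∧ insert t.1.2 (t.2.2.1.erase t.2.2.2) ∈ H).card + ((base.filter fun t : Tup n => ePf ei t.1.1 t.1.2 t.2.1.2 t.2.2.2 ∈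 H).card))))))))))))))
          ≤ r * ((r * r - r) * M) + (r * ((r * r - r) * M) + (r * ((r * r - r) * M) +
            (r * K * ((r * r - r) * M) + (r * K * ((r * r - r) * M) +
            (r * K * ((r * r - r) * M) + (r * K * ((r * r - r) * M) +
            (K * r * ((r * r - r) * M) + (K * r * ((r * r - r) * M) +
            (K * ((r * r - r) * M) + (r * K * ((r * r - r) * M) +
            (r * K * ((r * r - r) * M) + (K * K * ((r * r - r) * M) +
            (K * K * ((r * r - r) * M) +
            (r * r - r) * (K * ((r * r) * (K * K)))))))))))))))) := by
            exact add_le_add hB1 (add_le_add hB2 (add_le_add hB3 (add_le_add hB4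
              (add_le_add hB5 (add_le_add hB6 (add_le_add hB7 (add_le_add hB8
              (add_le_add hB9 (add_le_add hB10 (add_le_add hB11 (add_le_add hB12
              (add_le_add hB13 (add_le_add hB14 hB15)))))))))))))
        _ = (3 * r + 6 * (r * K) + (2 * (K * r) + (K + 2 * (K * K)))) * ((r * r - r) * M)
              + (r * r - r) * (K * ((r * r) * (K * K))) := by ring
    have hS14 : 3 * r + 6 * (r * K) + (2 * (K * r) + (K + 2 * (K * K)))
        ≤ 16 * (r ^ 4 * K ^ 3) := by
      have h3 : K * r ≤ r ^ 4 * K ^ 3 := by rw [mul_comm]; exact hrKle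
      omega
    have hstep : 2 * ((3 * r + 6 * (r * K) + (2 * (K * r) + (K + 2 * (K * K)))) *
        ((r * r - r) * M) + (r * r - r) * (K * ((r * r) * (K * K))))
        ≤ 2 * ((16 * (r ^ 4 * K ^ 3)) * ((r * r - r) * M)
            + (r * r - r) * ((r ^ 4 * K ^ 3) * M)) := by
      refine Nat.mul_le_mul_left 2 (add_le_add (Nat.mul_le_mul_right _ hS14)
        (Nat.mul_le_mul_left _ ?_))
      calc K * ((r * r) * (K * K)) ≤ r ^ 4 * K ^ 3 := hTle
        _ = (r ^ 4 * K ^ 3) * 1 := by ring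
        _ ≤ (r ^ 4 * K ^ 3) * M := Nat.mul_le_mul_left _ hM1
    have heq : 2 * ((16 * (r ^ 4 * K ^ 3)) * ((r * r - r) * M)
        + (r * r - r) * ((r ^ 4 * K ^ 3) * M)) = (r * r - r) * (34 * ((r ^ 4 * K ^ 3) * M)) := by
      ring
    have hlast : (r * r - r) * (34 * ((r ^ 4 * K ^ 3) * M)) ≤ (r * r - r) * (M * M) := by
      apply Nat.mul_le_mul_left
      have h100 : 100 * (34 * ((r ^ 4 * K ^ 3) * M)) ≤ 100 * (M * M) := by
        calc 100 * (34 * ((r ^ 4 * K ^ 3) * M)) = 34 * ((100 * (r ^ 4 * K ^ 3)) * M) := by ring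
          _ ≤ 34 * (M * M) := Nat.mul_le_mul_left _ (Nat.mul_le_mul_right M hM)
          _ ≤ 100 * (M * M) := Nat.mul_le_mul_right _ (by omega)
      omega
    calc 2 * bad.card
        ≤ 2 * ((3 * r + 6 * (r * K) + (2 * (K * r) + (K + 2 * (K * K)))) *
          ((r * r - r) * M) + (r * r - r) * (K * ((r * r) * (K * K)))) :=
          Nat.mul_le_mul_left 2 hsum
      _ ≤ 2 * ((16 * (r ^ 4 * K ^ 3)) * ((r * r - r) * M)
            + (r * r - r) * ((r ^ 4 * K ^ 3) * M)) := hstep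
      _ = (r * r - r) * (34 * ((r ^ 4 * K ^ 3) * M)) := heq
      _ ≤ (r * r - r) * (M * M) := hlast

  omega

lemma main_nat (hr : 3 ≤ r) (k : Fin n → ℕ) (heicard : ei.card = r)
    (hKpos : 1 ≤ kmax n k) (hM : 100 * (r ^ 4 * (kmax n k) ^ 3) ≤ Mk n k) :
    (Aset n r k ei).card * ((r * r - r) * (Mk n k * Mk n k)) ≤
      (Bset n r k ei).card * (2 * (2 * r ^ 2 * (kmax n k) ^ 3)) := by
  have hK : ∀ v, k v ≤ kmax n k := fun v => Finset.le_sup (Finset.mem_univ v)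
  calc (Aset n r k ei).card * ((r * r - r) * (Mk n k * Mk n k))
      = ∑ _H ∈ Aset n r k ei, (r * r - r) * (Mk n k * Mk n k) := by
        rw [Finset.sum_const, smul_eq_mul]
    _ ≤ ∑ H ∈ Aset n r k ei, 2 * (Sfor H ei).card := by
        apply Finset.sum_le_sum
        intro H hH
        simp only [Aset, Finset.mem_filter] at hH
        exact Sfor_card_lb hr heicard hH.2.1.1 hH.2.1.2 hK hKpos hM
    _ = 2 * ∑ H ∈ Aset n r k ei, (Sfor H ei).card := by rw [Finset.mul_sum]
    _ = 2 * ((Aset n r k ei).sigma fun H => Sfor H ei).card := by rw [Finset.card_sigma]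
    _ ≤ 2 * ((Bset n r k ei).sigma fun H => Rback H ei).card :=
        Nat.mul_le_mul_left 2 (psi_inj r k hr)
    _ = 2 * ∑ H ∈ Bset n r k ei, (Rback H ei).card := by rw [Finset.card_sigma]
    _ ≤ 2 * ((Bset n r k ei).card * (2 * r ^ 2 * (kmax n k) ^ 3)) := by
        apply Nat.mul_le_mul_left
        rw [← smul_eq_mul]
        apply Finset.sum_le_card_nsmul
        intro H' hH'
        simp only [Bset, Finset.mem_filter] at hH'
        exact Rback_card hr heicard hH'.2.1.2 hK
    _ = (Bset n r k ei).card * (2 * (2 * r ^ 2 * (kmax n k) ^ 3)) := by ring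

end Main
end Stmt10

set_option maxHeartbeats 1000000 in
theorem stmt10 :
    ∃ C : ℝ, 0 < C ∧ ∃ δ : ℝ, 0 < δ ∧
      ∀ (n r : ℕ) (k : Fin n → ℕ) (ei : Finset (Fin n)),
        3 ≤ n → 3 ≤ r → ei.card = r →
        (r : ℝ) ^ 4 * (kmax n k : ℝ) ^ 3 ≤ δ * (Mk n k : ℝ) →
        (({H ∈ HrSet n r k | ei ∈ H}).ncard : ℝ) ≤
          C * (({H ∈ HrSet n r k | ei ∉ H}).ncard : ℝ) *
            ((kmax n k : ℝ) ^ 3 / (Mk n k : ℝ) ^ 2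
              + (r : ℝ) * (kmax n k : ℝ) ^ 4 / (Mk n k : ℝ) ^ 3) := by
  classical
  refine ⟨6, by norm_num, 1/100, by norm_num, ?_⟩
  intro n r k ei hn hr hei hMr
  have hAset : {H ∈ HrSet n r k | ei ∈ H} = ↑(Stmt10.Aset n r k ei) := by
    ext H
    simp only [Set.mem_setOf_eq, Finset.mem_coe, Stmt10.Aset, Finset.mem_filter,
      Finset.mem_univ, true_and, HrSet]
  have hBset : {H ∈ HrSet n r k | ei ∉ H} = ↑(Stmt10.Bset n r k ei) := by
    ext H
    simp only [Set.mem_setOf_eq, Finset.mem_coe, Stmt10.Bset, Finset.mem_filter,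
      Finset.mem_univ, true_and, HrSet]
  rw [hAset, hBset, Set.ncard_coe_finset, Set.ncard_coe_finset]
  by_cases hK0 : kmax n k = 0
  · have hAempty : Stmt10.Aset n r k ei = ∅ := by
      rw [Finset.eq_empty_iff_forall_notMem]
      intro H hH
      simp only [Stmt10.Aset, Finset.mem_filter] at hH
      obtain ⟨-, ⟨hU, hd⟩, heiH⟩ := hH
      have hv : 0 < ei.card := by omega
      obtain ⟨v, hvei⟩ := Finset.card_pos.1 hv
      have h1 : 1 ≤ hDeg n H v := by
        rw [hDeg]
        exact Finset.card_pos.2 ⟨ei, Finset.mem_filter.2 ⟨heiH, hvei⟩⟩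
      have h2 := hd v
      have h3 : k v ≤ kmax n k := Finset.le_sup (Finset.mem_univ v)
      omega
    rw [hAempty, hK0]
    simp
  · have hK1 : 1 ≤ kmax n k := Nat.one_le_iff_ne_zero.2 hK0
    have hMnat : 100 * (r ^ 4 * (kmax n k) ^ 3) ≤ Mk n k := by
      have h100 : (100 : ℝ) * ((r : ℝ) ^ 4 * (kmax n k : ℝ) ^ 3) ≤ (Mk n k : ℝ) := by
        rw [div_mul_eq_mul_div, le_div_iff₀ (by norm_num : (0:ℝ) < 100)] at hMr
        · linarith
      exact_mod_cast h100
    have hnat := Stmt10.main_nat hr k hei hK1 hMnat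
    have hle_rr : r ≤ r * r := Nat.le_mul_of_pos_left r (by omega)
    have hcast : ((Stmt10.Aset n r k ei).card : ℝ) *
        (((r : ℝ) * r - r) * ((Mk n k : ℝ) * (Mk n k : ℝ))) ≤
        ((Stmt10.Bset n r k ei).card : ℝ) *
          (2 * (2 * (r : ℝ) ^ 2 * (kmax n k : ℝ) ^ 3)) := by
      have h' := (Nat.cast_le (α := ℝ)).mpr hnat
      push_cast [Nat.cast_sub hle_rr] at h'
      convert h' using 2
    set a := ((Stmt10.Aset n r k ei).card : ℝ) with hadef
    set b := ((Stmt10.Bset n r k ei).card : ℝ) with hbdef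
    set K := ((kmax n k : ℕ) : ℝ) with hKdef
    set M := ((Mk n k : ℕ) : ℝ) with hMdef
    have hb0 : (0:ℝ) ≤ b := Nat.cast_nonneg _
    have ha0 : (0:ℝ) ≤ a := Nat.cast_nonneg _
    have hK0' : (1:ℝ) ≤ K := by rw [hKdef]; exact_mod_cast hK1
    have hR3 : (3:ℝ) ≤ (r:ℝ) := by exact_mod_cast hr
    have hM0 : (0:ℝ) < M := by
      have h1 : 1 ≤ Mk n k := by
        have h2 : 0 < 100 * (r ^ 4 * (kmax n k) ^ 3) :=
          Nat.mul_pos (by norm_num)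
            (Nat.mul_pos (pow_pos (by omega) 4) (pow_pos (by omega) 3))
        omega
      rw [hMdef]
      exact_mod_cast h1
    have hstep1 : a * M ^ 2 ≤ 6 * b * K ^ 3 := by
      have hpos : (0:ℝ) < (r:ℝ) * r - r := by nlinarith
      have h6 : b * (2 * (2 * (r:ℝ) ^ 2 * K ^ 3)) ≤ ((r:ℝ) * r - r) * (6 * b * K ^ 3) := by
        have hK3 : (0:ℝ) ≤ K ^ 3 := by positivity
        have e : ((r:ℝ) * r - r) * (6 * b * K ^ 3) - b * (2 * (2 * (r:ℝ) ^ 2 * K ^ 3))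
            = (2 * ((r:ℝ) * ((r:ℝ) - 3))) * (b * K ^ 3) := by ring
        have h0 : (0:ℝ) ≤ (2 * ((r:ℝ) * ((r:ℝ) - 3))) * (b * K ^ 3) := by
          have h1 : (0:ℝ) ≤ (r:ℝ) * ((r:ℝ) - 3) := mul_nonneg (by linarith) (by linarith)
          exact mul_nonneg (by linarith) (mul_nonneg hb0 hK3)
        linarith
      have h7 : ((r:ℝ) * r - r) * (a * M ^ 2) ≤ ((r:ℝ) * r - r) * (6 * b * K ^ 3) := by
        calc ((r:ℝ) * r - r) * (a * M ^ 2) = a * (((r:ℝ) * r - r) * (M * M)) := by ring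
          _ ≤ b * (2 * (2 * (r:ℝ) ^ 2 * K ^ 3)) := hcast
          _ ≤ ((r:ℝ) * r - r) * (6 * b * K ^ 3) := h6
      exact le_of_mul_le_mul_left h7 hpos
    have hgoal1 : a ≤ 6 * b * (K ^ 3 / M ^ 2) := by
      have := (le_div_iff₀ (by positivity : (0:ℝ) < M ^ 2)).2 hstep1
      calc a ≤ 6 * b * K ^ 3 / M ^ 2 := this
        _ = 6 * b * (K ^ 3 / M ^ 2) := by ring
    calc a ≤ 6 * b * (K ^ 3 / M ^ 2) := hgoal1
      _ ≤ 6 * b * (K ^ 3 / M ^ 2 + (r:ℝ) * K ^ 4 / M ^ 3) := by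
          have hnn : (0:ℝ) ≤ (r:ℝ) * K ^ 4 / M ^ 3 := by positivity
          have h6b : (0:ℝ) ≤ 6 * b := by linarith
          nlinarith [mul_nonneg h6b hnn]
end
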